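/- Every $n$-vertex graph of treewidth at most $t$ has pathwidth at most $(t+1)\lfloor \log_3(2n+1) + 1 \rfloor - 1$. -/

import Mathlib

open SimpleGraph

attribute [local instance 10] Classical.propDecidable

namespace TwPw

variable {ι : Type} {T : SimpleGraph ι}

/-- The canonical path between two vertices of a connected graph. -/
noncomputable def pw (hc : T.Connected) (i j : ι) : T.Walk i j :=
  (Classical.choice (hc.preconnected i j)).bypass

lemma pw_isPath (hc : T.Connected) (i j : ι) : (pw hc i j).IsPath :=
  SimpleGraph.Walk.bypass_isPath _

lemma pw_uniq (hc : T.Connected) (ha : T.IsAcyclic) {i j : ι} (q : T.Walk i j)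
    (hq : q.IsPath) : q = pw hc i j := by
  have := ha.path_unique ⟨q, hq⟩ ⟨pw hc i j, pw_isPath hc i j⟩
  exact congrArg Subtype.val this

lemma pw_refl (hc : T.Connected) (ha : T.IsAcyclic) (i : ι) :
    pw hc i i = SimpleGraph.Walk.nil := (pw_uniq hc ha _ (SimpleGraph.Walk.IsPath.nil)).symm

lemma support_pw_refl (hc : T.Connected) (ha : T.IsAcyclic) (i : ι) :
    (pw hc i i).support = [i] := by rw [pw_refl hc ha]; rfl

lemma pw_rev (hc : T.Connected) (ha : T.IsAcyclic) (i j : ι) :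
    (pw hc i j).reverse = pw hc j i :=
  pw_uniq hc ha _ ((pw_isPath hc i j).reverse)

lemma mem_support_pw_rev (hc : T.Connected) (ha : T.IsAcyclic) {i j x : ι} :
    x ∈ (pw hc i j).support ↔ x ∈ (pw hc j i).support := by
  rw [← pw_rev hc ha i j, SimpleGraph.Walk.support_reverse, List.mem_reverse]

lemma start_mem_pw (hc : T.Connected) (i j : ι) : i ∈ (pw hc i j).support :=
  SimpleGraph.Walk.start_mem_support _

lemma end_mem_pw (hc : T.Connected) (i j : ι) : j ∈ (pw hc i j).support :=
  SimpleGraph.Walk.end_mem_support _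

/-- L3: triangle inequality for path supports. -/
lemma support_pw_triangle (hc : T.Connected) (ha : T.IsAcyclic) (i j k : ι) {x : ι}
    (hx : x ∈ (pw hc i k).support) :
    x ∈ (pw hc i j).support ∨ x ∈ (pw hc j k).support := by
  have h1 : ((pw hc i j).append (pw hc j k)).bypass = pw hc i k :=
    pw_uniq hc ha _ (SimpleGraph.Walk.bypass_isPath _)
  rw [← h1] at hx
  have := SimpleGraph.Walk.support_bypass_subset _ hx
  rwa [SimpleGraph.Walk.mem_support_append_iff] at this

/-- L4: splitting the path at one of its support points. -/
lemma pw_append_of_mem (hc : T.Connected) (ha : T.IsAcyclic) {i j k : ι}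
    (h : j ∈ (pw hc i k).support) :
    (pw hc i j).append (pw hc j k) = pw hc i k := by
  have h1 : (pw hc i k).takeUntil j h = pw hc i j :=
    pw_uniq hc ha _ ((pw_isPath hc i k).takeUntil h)
  have h2 : (pw hc i k).dropUntil j h = pw hc j k :=
    pw_uniq hc ha _ ((pw_isPath hc i k).dropUntil h)
  rw [← h1, ← h2, SimpleGraph.Walk.take_spec]

lemma support_pw_left_subset (hc : T.Connected) (ha : T.IsAcyclic) {i j k : ι}
    (h : j ∈ (pw hc i k).support) :
    ∀ x ∈ (pw hc i j).support, x ∈ (pw hc i k).support := by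
  intro x hx
  rw [← pw_append_of_mem hc ha h, SimpleGraph.Walk.mem_support_append_iff]
  exact Or.inl hx

lemma support_pw_right_subset (hc : T.Connected) (ha : T.IsAcyclic) {i j k : ι}
    (h : j ∈ (pw hc i k).support) :
    ∀ x ∈ (pw hc j k).support, x ∈ (pw hc i k).support := by
  intro x hx
  rw [← pw_append_of_mem hc ha h, SimpleGraph.Walk.mem_support_append_iff]
  exact Or.inr hx

/-- Appending two paths that only meet at the junction point yields a path. -/
lemma isPath_append (hc : T.Connected) {i j k : ι} {p : T.Walk i j} {q : T.Walk j k}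
    (hp : p.IsPath) (hq : q.IsPath)
    (hmeet : ∀ x, x ∈ p.support → x ∈ q.support → x = j) : (p.append q).IsPath := by
  rw [SimpleGraph.Walk.isPath_def, SimpleGraph.Walk.support_append]
  refine List.Nodup.append hp.support_nodup (hq.support_nodup.sublist (List.tail_sublist _)) ?_
  rw [List.disjoint_left]
  intro x hxp hxq
  have hxq' : x ∈ q.support := List.mem_of_mem_tail hxq
  have hx : x = j := hmeet x hxp hxq'
  subst hx
  have hnd : q.support.Nodup := hq.support_nodup
  rw [SimpleGraph.Walk.support_eq_cons q] at hnd
  exact (List.nodup_cons.mp hnd).1 hxq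

/-- Between two points on a canonical path, the canonical path stays in the support. -/
lemma support_pw_between (hc : T.Connected) (ha : T.IsAcyclic) {a b x y : ι}
    (hx : x ∈ (pw hc a b).support) (hy : y ∈ (pw hc a b).support) :
    ∀ z ∈ (pw hc x y).support, z ∈ (pw hc a b).support := by
  intro z hz
  have hsplit := pw_append_of_mem hc ha hx
  have hy' : y ∈ (pw hc a x).support ∨ y ∈ (pw hc x b).support := by
    rw [← hsplit, SimpleGraph.Walk.mem_support_append_iff] at hy
    exact hy
  rcases hy' with hy' | hy'
  · -- y on the first part: pw x y reverse of pw y x ⊆ pw a x reversed...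
    have hyx : ∀ w ∈ (pw hc y x).support, w ∈ (pw hc a x).support :=
      support_pw_right_subset hc ha hy'
    have hz' : z ∈ (pw hc y x).support := (mem_support_pw_rev hc ha).mp hz
    exact support_pw_left_subset hc ha hx _ (hyx z hz')
  · have := support_pw_left_subset hc ha hy' z hz
    exact support_pw_right_subset hc ha hx z this

end TwPw

namespace TwPw

variable {ι : Type} {T : SimpleGraph ι}

/-- A finset of vertices closed under canonical paths. -/
def Closed (hc : T.Connected) (A : Finset ι) : Prop :=
  ∀ a ∈ A, ∀ b ∈ A, ∀ x ∈ (pw hc a b).support, x ∈ A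

/-- `z` is the attachment point of `y` at the set `P`. -/
def IsAtt (hc : T.Connected) (P : Finset ι) (y z : ι) : Prop :=
  z ∈ P ∧ ∀ x ∈ (pw hc y z).support, x ∈ P → x = z

lemma isAtt_of_walk (hc : T.Connected) (ha : T.IsAcyclic) {P : Finset ι} {y z : ι}
    (w : T.Walk y z) (hz : z ∈ P) (hw : ∀ x ∈ w.support, x ∈ P → x = z) :
    IsAtt hc P y z := by
  refine ⟨hz, ?_⟩
  have he : w.bypass = pw hc y z := pw_uniq hc ha _ (SimpleGraph.Walk.bypass_isPath w)
  intro x hx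
  rw [← he] at hx
  exact hw x (SimpleGraph.Walk.support_bypass_subset _ hx)

lemma exists_first (hc : T.Connected) (ha : T.IsAcyclic) (P : Finset ι) :
    ∀ {y b : ι} (q : T.Walk y b), (∃ x ∈ q.support, x ∈ P) →
      ∃ z, IsAtt hc P y z ∧ z ∈ q.support := by
  intro y b q
  induction q with
  | nil =>
    rintro ⟨x, hx, hxP⟩
    simp only [SimpleGraph.Walk.support_nil, List.mem_singleton] at hx
    subst hx
    refine ⟨x, ⟨hxP, ?_⟩, by simp⟩
    intro w hw _
    rw [support_pw_refl hc ha] at hw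
    simpa using hw
  | @cons y c b h q' ih =>
    rintro ⟨x, hx, hxP⟩
    by_cases hy : y ∈ P
    · refine ⟨y, ⟨hy, ?_⟩, SimpleGraph.Walk.start_mem_support _⟩
      intro w hw _
      rw [support_pw_refl hc ha] at hw
      simpa using hw
    · have hx' : x ∈ q'.support := by
        rw [SimpleGraph.Walk.support_cons] at hx
        rcases List.mem_cons.mp hx with rfl | hx'
        · exact absurd hxP hy
        · exact hx'
      obtain ⟨z, hz, hzsup⟩ := ih ⟨x, hx', hxP⟩
      refine ⟨z, ?_, by simp [hzsup]⟩
      refine isAtt_of_walk hc ha (SimpleGraph.Walk.cons h (pw hc c z)) hz.1 ?_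
      intro w hw hwP
      rw [SimpleGraph.Walk.support_cons] at hw
      rcases List.mem_cons.mp hw with rfl | hw'
      · exact absurd hwP hy
      · exact hz.2 w hw' hwP

lemma att_unique (hc : T.Connected) (ha : T.IsAcyclic) {P : Finset ι}
    (hP : ∀ a ∈ P, ∀ b ∈ P, ∀ x ∈ (pw hc a b).support, x ∈ P) {y z z' : ι}
    (h : IsAtt hc P y z) (h' : IsAtt hc P y z') : z = z' := by
  by_contra hne
  have hpath : ((pw hc y z).append (pw hc z z')).IsPath := by
    refine isPath_append hc (pw_isPath hc y z) (pw_isPath hc z z') ?_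
    intro x hx1 hx2
    exact h.2 x hx1 (hP z h.1 z' h'.1 x hx2)
  have he : (pw hc y z).append (pw hc z z') = pw hc y z' := pw_uniq hc ha _ hpath
  have hzmem : z ∈ (pw hc y z').support := by
    rw [← he, SimpleGraph.Walk.mem_support_append_iff]
    exact Or.inl (SimpleGraph.Walk.end_mem_support _)
  exact hne (h'.2 z hzmem h.1)

/-- The attachment point of `y` at `P`. -/
noncomputable def att (hc : T.Connected) (P : Finset ι) (y : ι) : ι :=
  if h : ∃ z, IsAtt hc P y z then h.choose else y

lemma att_isAtt (hc : T.Connected) {P : Finset ι} {y : ι} (h : ∃ z, IsAtt hc P y z) :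
    IsAtt hc P y (att hc P y) := by
  rw [att, dif_pos h]
  exact h.choose_spec

lemma exists_isAtt (hc : T.Connected) (ha : T.IsAcyclic) {P : Finset ι} {y p : ι}
    (hp : p ∈ P) : ∃ z, IsAtt hc P y z := by
  obtain ⟨z, hz, _⟩ := exists_first hc ha P (pw hc y p)
    ⟨p, SimpleGraph.Walk.end_mem_support _, hp⟩
  exact ⟨z, hz⟩

lemma att_eq (hc : T.Connected) (ha : T.IsAcyclic) {P : Finset ι}
    (hP : ∀ a ∈ P, ∀ b ∈ P, ∀ x ∈ (pw hc a b).support, x ∈ P) {y z : ι}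
    (h : IsAtt hc P y z) : att hc P y = z :=
  att_unique hc ha hP (att_isAtt hc ⟨z, h⟩) h

lemma att_mem (hc : T.Connected) {P : Finset ι} {y : ι} (h : ∃ z, IsAtt hc P y z) :
    att hc P y ∈ P := (att_isAtt hc h).1

/-- Connected component of `y` in `A` after removing the cut `P`. -/
noncomputable def compo (hc : T.Connected) (A P : Finset ι) (y : ι) : Finset ι :=
  A.filter (fun z => ∀ x ∈ (pw hc y z).support, x ∉ P)

lemma mem_compo {hc : T.Connected} {A P : Finset ι} {y z : ι} :
    z ∈ compo hc A P y ↔ z ∈ A ∧ ∀ x ∈ (pw hc y z).support, x ∉ P := by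
  simp [compo]

lemma compo_subset {hc : T.Connected} {A P : Finset ι} {y : ι} :
    compo hc A P y ⊆ A := Finset.filter_subset _ _

lemma self_mem_compo (hc : T.Connected) (ha : T.IsAcyclic) {A P : Finset ι} {y : ι}
    (hy : y ∈ A) (hyP : y ∉ P) : y ∈ compo hc A P y := by
  rw [mem_compo]
  refine ⟨hy, ?_⟩
  intro x hx
  rw [support_pw_refl hc ha] at hx
  rw [List.mem_singleton] at hx
  subst hx
  exact hyP

lemma not_mem_P_of_mem_compo (hc : T.Connected) {A P : Finset ι} {y z : ι}
    (hz : z ∈ compo hc A P y) : z ∉ P :=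
  (mem_compo.mp hz).2 z (SimpleGraph.Walk.end_mem_support _)

lemma mem_compo_symm (hc : T.Connected) (ha : T.IsAcyclic) {A P : Finset ι} {y z : ι}
    (hy : y ∈ A) (hz : z ∈ compo hc A P y) : y ∈ compo hc A P z := by
  rw [mem_compo] at hz ⊢
  refine ⟨hy, ?_⟩
  intro x hx
  exact hz.2 x ((mem_support_pw_rev hc ha).mp hx)

lemma compo_eq_of_mem (hc : T.Connected) (ha : T.IsAcyclic) {A P : Finset ι} {y z : ι}
    (hy : y ∈ A) (hz : z ∈ compo hc A P y) : compo hc A P z = compo hc A P y := by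
  ext w
  rw [mem_compo, mem_compo]
  constructor
  · rintro ⟨hwA, hw⟩
    refine ⟨hwA, ?_⟩
    intro x hx
    rcases support_pw_triangle hc ha y z w hx with h | h
    · exact (mem_compo.mp hz).2 x h
    · exact hw x h
  · rintro ⟨hwA, hw⟩
    refine ⟨hwA, ?_⟩
    intro x hx
    rcases support_pw_triangle hc ha z y w hx with h | h
    · exact (mem_compo.mp (mem_compo_symm hc ha hy hz)).2 x h
    · exact hw x h

lemma compo_closed (hc : T.Connected) (ha : T.IsAcyclic) {A P : Finset ι}
    (hA : Closed hc A) {y z z' : ι} (hy : y ∈ A) (hz : z ∈ compo hc A P y)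
    (hz' : z' ∈ compo hc A P y) :
    ∀ x ∈ (pw hc z z').support, x ∈ compo hc A P y := by
  intro x hx
  have hzA : z ∈ A := compo_subset hz
  have hz'A : z' ∈ A := compo_subset hz'
  rw [mem_compo]
  refine ⟨hA z hzA z' hz'A x hx, ?_⟩
  have hzz' : ∀ w ∈ (pw hc z z').support, w ∉ P := by
    have : z' ∈ compo hc A P z := by
      rw [compo_eq_of_mem hc ha hy hz]
      exact hz'
    exact (mem_compo.mp this).2
  intro w hw
  rcases support_pw_triangle hc ha y z x hw with h | h
  · exact (mem_compo.mp hz).2 w h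
  · exact hzz' w (support_pw_left_subset hc ha hx w h)

lemma compo_mono (hc : T.Connected) {A P P' : Finset ι} (h : P ⊆ P') (y : ι) :
    compo hc A P' y ⊆ compo hc A P y := by
  intro z hz
  rw [mem_compo] at hz ⊢
  exact ⟨hz.1, fun x hx hxP => hz.2 x hx (h hxP)⟩

lemma crossing (hc : T.Connected) (ha : T.IsAcyclic) {A P : Finset ι}
    (hP : ∀ a ∈ P, ∀ b ∈ P, ∀ x ∈ (pw hc a b).support, x ∈ P) {y z : ι}
    (hz : ∃ x ∈ (pw hc y z).support, x ∈ P) :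
    att hc P y ∈ (pw hc y z).support := by
  obtain ⟨z₁, hz₁, hz₁sup⟩ := exists_first hc ha P (pw hc y z) hz
  rwa [att_eq hc ha hP hz₁]

lemma crossing_of_not_mem_compo (hc : T.Connected) (ha : T.IsAcyclic) {A P : Finset ι}
    (hP : ∀ a ∈ P, ∀ b ∈ P, ∀ x ∈ (pw hc a b).support, x ∈ P) {y z : ι}
    (hzA : z ∈ A) (hz : z ∉ compo hc A P y) :
    att hc P y ∈ (pw hc y z).support := by
  rw [mem_compo] at hz
  push_neg at hz
  exact crossing hc ha hP (A := A) (hz hzA)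

lemma att_comp_const (hc : T.Connected) (ha : T.IsAcyclic) {A P : Finset ι}
    (hP : ∀ a ∈ P, ∀ b ∈ P, ∀ x ∈ (pw hc a b).support, x ∈ P) {y z : ι}
    (hy : ∃ w, IsAtt hc P y w) (hyA : y ∈ A) (hz : z ∈ compo hc A P y) :
    att hc P z = att hc P y := by
  have hy' := att_isAtt hc hy
  refine att_eq hc ha hP ?_
  refine isAtt_of_walk hc ha ((pw hc z y).append (pw hc y (att hc P y))) hy'.1 ?_
  intro x hx hxP
  rw [SimpleGraph.Walk.mem_support_append_iff] at hx
  rcases hx with hx | hx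
  · exact absurd hxP ((mem_compo.mp (mem_compo_symm hc ha hyA hz)).2 x hx)
  · exact hy'.2 x hx hxP

lemma exists_snd (hc : T.Connected) (ha : T.IsAcyclic) {x y : ι} (hne : x ≠ y) :
    ∃ (c : ι) (h : T.Adj x c), pw hc x y = SimpleGraph.Walk.cons h (pw hc c y) ∧
      x ∉ (pw hc c y).support := by
  obtain ⟨c, h, q, hq⟩ := SimpleGraph.Walk.exists_eq_cons_of_ne hne (pw hc x y)
  have hqp : q.IsPath := by
    have := pw_isPath hc x y
    rw [hq] at this
    exact this.of_cons
  have hqe : q = pw hc c y := pw_uniq hc ha q hqp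
  refine ⟨c, h, by rw [hq, hqe], ?_⟩
  have := pw_isPath hc x y
  rw [hq, hqe] at this
  rw [SimpleGraph.Walk.isPath_def, SimpleGraph.Walk.support_cons] at this
  exact (List.nodup_cons.mp this).1

end TwPw

namespace TwPw

variable {ι : Type} {T : SimpleGraph ι}

lemma snd_mem_compo (hc : T.Connected) (ha : T.IsAcyclic) {A : Finset ι}
    (hA : Closed hc A) {c y : ι} (hcA : c ∈ A) (hy : y ∈ A) (hne : c ≠ y) :
    ∃ (x' : ι) (h : T.Adj c x'), pw hc c y = SimpleGraph.Walk.cons h (pw hc x' y) ∧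
      x' ∈ compo hc A {c} y ∧ c ∉ (pw hc x' y).support := by
  obtain ⟨x', hadj, hdecomp, hnotmem⟩ := exists_snd hc ha hne
  have hx'sup : x' ∈ (pw hc c y).support := by
    rw [hdecomp, SimpleGraph.Walk.support_cons]
    exact List.mem_cons_of_mem _ (SimpleGraph.Walk.start_mem_support _)
  have hx'A : x' ∈ A := hA c hcA y hy x' hx'sup
  refine ⟨x', hadj, hdecomp, ?_, hnotmem⟩
  rw [mem_compo]
  refine ⟨hx'A, ?_⟩
  intro x hx hxc
  rw [Finset.mem_singleton] at hxc
  subst hxc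
  exact hnotmem ((mem_support_pw_rev hc ha).mp hx)

lemma compo_eq_of_not_disjoint (hc : T.Connected) (ha : T.IsAcyclic) {A P : Finset ι}
    {y y' : ι} (hy : y ∈ A) (hy' : y' ∈ A)
    (h : ¬ Disjoint (compo hc A P y) (compo hc A P y')) :
    compo hc A P y = compo hc A P y' := by
  obtain ⟨u, hu, hu'⟩ := Finset.not_disjoint_iff.mp h
  rw [← compo_eq_of_mem hc ha hy hu, ← compo_eq_of_mem hc ha hy' hu']

/-- Centroid: a node all of whose components have at most half the total weight. -/
lemma centroid (hc : T.Connected) (ha : T.IsAcyclic) {A : Finset ι} (hA : Closed hc A)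
    (hne : A.Nonempty) (w : ι → ℕ) :
    ∃ c ∈ A, ∀ y ∈ A, y ≠ c →
      2 * (∑ i ∈ compo hc A {c} y, w i) ≤ ∑ i ∈ A, w i := by
  obtain ⟨c, hcA, hmin⟩ := Finset.exists_min_image A
    (fun c => ∑ y ∈ A, w y * (pw hc c y).length) hne
  refine ⟨c, hcA, ?_⟩
  intro y hy hyne
  obtain ⟨c₁, hadj, hdecomp, hc₁compo, hnotmem⟩ :=
    snd_mem_compo hc ha hA hcA hy (fun h => hyne h.symm)
  have hc₁A : c₁ ∈ A := compo_subset hc₁compo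
  -- the side of c₁
  set S' := A.filter (fun z => c₁ ∈ (pw hc c z).support) with hS'
  have hstep : ∀ z ∈ A, (c₁ ∈ (pw hc c z).support ∧
      (pw hc c z).length = (pw hc c₁ z).length + 1) ∨
      (c₁ ∉ (pw hc c z).support ∧ (pw hc c₁ z).length = (pw hc c z).length + 1) := by
    intro z _
    have hcc₁ : pw hc c c₁ = SimpleGraph.Walk.cons hadj SimpleGraph.Walk.nil := by
      refine (pw_uniq hc ha _ ?_).symm
      rw [SimpleGraph.Walk.cons_isPath_iff]
      refine ⟨SimpleGraph.Walk.IsPath.nil, ?_⟩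
      simp [hadj.ne]
    by_cases hmem : c₁ ∈ (pw hc c z).support
    · left
      refine ⟨hmem, ?_⟩
      have := pw_append_of_mem hc ha hmem
      have hlen := congrArg SimpleGraph.Walk.length this
      rw [SimpleGraph.Walk.length_append, hcc₁] at hlen
      simp at hlen
      omega
    · right
      refine ⟨hmem, ?_⟩
      have hpath : (SimpleGraph.Walk.cons hadj.symm (pw hc c z)).IsPath := by
        rw [SimpleGraph.Walk.cons_isPath_iff]
        exact ⟨pw_isPath hc c z, hmem⟩
      have := pw_uniq hc ha _ hpath
      have hlen := congrArg SimpleGraph.Walk.length this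
      rw [SimpleGraph.Walk.length_cons] at hlen
      omega
  -- weight balance identity
  have hbal : (∑ z ∈ A, w z * (pw hc c₁ z).length) + 2 * (∑ z ∈ S', w z)
      = (∑ z ∈ A, w z * (pw hc c z).length) + ∑ z ∈ A, w z := by
    rw [hS', Finset.sum_filter, Finset.mul_sum, ← Finset.sum_add_distrib,
      ← Finset.sum_add_distrib]
    refine Finset.sum_congr rfl ?_
    intro z hz
    rcases hstep z hz with ⟨hmem, hlen⟩ | ⟨hmem, hlen⟩
    · rw [if_pos hmem, hlen]; ring
    · rw [if_neg hmem, hlen]; ring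
  have hmin' := hmin c₁ hc₁A
  have hS'le : 2 * (∑ z ∈ S', w z) ≤ ∑ z ∈ A, w z := by omega
  -- compo ⊆ S'
  have hsub : compo hc A {c} y ⊆ S' := by
    intro z hz
    have hzA : z ∈ A := compo_subset hz
    have hznec : c ≠ z := by
      intro h
      exact (not_mem_P_of_mem_compo hc hz) (by rw [← h]; exact Finset.mem_singleton_self c)
    obtain ⟨c₁', hadj', hdecomp', hc₁'compoz, hnotmem'⟩ :=
      snd_mem_compo hc ha hA hcA hzA hznec
    have hcompoeq : compo hc A {c} z = compo hc A {c} y :=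
      compo_eq_of_mem hc ha hy hz
    have hc₁'compo : c₁' ∈ compo hc A {c} y := by rw [← hcompoeq]; exact hc₁'compoz
    have heq : c₁' = c₁ := by
      by_contra hcc
      have hpath : (SimpleGraph.Walk.cons hadj.symm
          (SimpleGraph.Walk.cons hadj' SimpleGraph.Walk.nil)).IsPath := by
        rw [SimpleGraph.Walk.cons_isPath_iff, SimpleGraph.Walk.cons_isPath_iff]
        refine ⟨⟨SimpleGraph.Walk.IsPath.nil, by simp [hadj'.ne]⟩, ?_⟩
        simp only [SimpleGraph.Walk.support_cons, SimpleGraph.Walk.support_nil]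
        intro hmem
        rcases List.mem_cons.mp hmem with h | h
        · exact hadj.ne h.symm
        · rw [List.mem_singleton] at h
          exact hcc h.symm
      have := pw_uniq hc ha _ hpath
      have hcmem : c ∈ (pw hc c₁ c₁').support := by
        rw [← this, SimpleGraph.Walk.support_cons]
        exact List.mem_cons_of_mem _ (SimpleGraph.Walk.start_mem_support _)
      have := compo_closed hc ha hA hy hc₁compo hc₁'compo c hcmem
      exact (not_mem_P_of_mem_compo hc this) (Finset.mem_singleton_self c)
    rw [hS', Finset.mem_filter]
    refine ⟨hzA, ?_⟩
    subst heq
    rw [hdecomp', SimpleGraph.Walk.support_cons]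
    exact List.mem_cons_of_mem _ (SimpleGraph.Walk.start_mem_support _)
  calc 2 * (∑ i ∈ compo hc A {c} y, w i) ≤ 2 * (∑ z ∈ S', w z) := by
        have := Finset.sum_le_sum_of_subset (f := w) hsub
        omega
    _ ≤ ∑ z ∈ A, w z := hS'le

end TwPw

namespace TwPw

variable {ι : Type} {T : SimpleGraph ι}

lemma descent (hc : T.Connected) (ha : T.IsAcyclic) (w : ι → ℕ) (W : ℕ) :
    ∀ (N : ℕ) (B : Finset ι), B.card ≤ N → Closed hc B → ∀ x ∈ B,
      2 * (∑ i ∈ B, w i) ≤ W →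
      ∃ z ∈ B, (∀ u ∈ (pw hc x z).support, u ∈ B) ∧
        ∀ y ∈ B, y ∉ (pw hc x z).support →
          3 * (∑ i ∈ compo hc B (pw hc x z).support.toFinset y, w i) ≤ W := by
  intro N
  induction N with
  | zero =>
    intro B hcard _ x hx _
    have := Finset.card_pos.mpr ⟨x, hx⟩
    omega
  | succ N IH =>
    intro B hcard hB x hx hw
    by_cases hE : B.erase x = ∅
    · refine ⟨x, hx, ?_, ?_⟩
      · intro u hu
        rw [support_pw_refl hc ha] at hu
        rw [List.mem_singleton] at hu
        subst hu; exact hx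
      · intro y hy hynot
        exfalso
        apply hynot
        rw [support_pw_refl hc ha, List.mem_singleton]
        by_contra hne
        have : y ∈ B.erase x := Finset.mem_erase.mpr ⟨hne, hy⟩
        rw [hE] at this
        simpa using this
    · have hEne : (B.erase x).Nonempty := Finset.nonempty_of_ne_empty hE
      set CP := (B.erase x).image (fun y => compo hc B {x} y) with hCP
      have hCPne : CP.Nonempty := hEne.image _
      obtain ⟨D₁, hD₁mem, hD₁max⟩ := Finset.exists_max_image CP (fun C => ∑ i ∈ C, w i) hCPne
      obtain ⟨y₁, hy₁E, hy₁D⟩ := Finset.mem_image.mp hD₁mem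
      have hy₁B : y₁ ∈ B := Finset.mem_of_mem_erase hy₁E
      have hy₁x : y₁ ≠ x := (Finset.mem_erase.mp hy₁E).1
      have hy₁D₁ : y₁ ∈ D₁ := by
        rw [← hy₁D]
        exact self_mem_compo hc ha hy₁B (by simpa using hy₁x)
      by_cases hbig : 3 * (∑ i ∈ D₁, w i) ≤ W
      · -- stop here, z = x
        refine ⟨x, hx, ?_, ?_⟩
        · intro u hu
          rw [support_pw_refl hc ha] at hu
          rw [List.mem_singleton] at hu
          subst hu; exact hx
        · intro y hy hynot
          have hyx : y ≠ x := by
            intro h; apply hynot; rw [support_pw_refl hc ha, List.mem_singleton]; exact h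
          have hPeq : (pw hc x x).support.toFinset = {x} := by
            rw [support_pw_refl hc ha]; simp
          rw [hPeq]
          have hyC : compo hc B {x} y ∈ CP :=
            Finset.mem_image.mpr ⟨y, Finset.mem_erase.mpr ⟨hyx, hy⟩, rfl⟩
          have := hD₁max _ hyC
          omega
      · -- recurse into D₁
        obtain ⟨x', hadj, hdecomp, hx'compo, hnotmem⟩ :=
          snd_mem_compo hc ha hB hx hy₁B (fun h => hy₁x h.symm)
        have hx'D₁ : x' ∈ D₁ := by rw [← hy₁D]; exact hx'compo
        have hD₁sub : D₁ ⊆ B.erase x := by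
          intro z hz
          rw [← hy₁D] at hz
          refine Finset.mem_erase.mpr ⟨?_, compo_subset hz⟩
          intro h
          exact (not_mem_P_of_mem_compo hc hz) (by rw [h]; exact Finset.mem_singleton_self x)
        have hD₁card : D₁.card ≤ N := by
          have h1 := Finset.card_le_card hD₁sub
          have h2 := Finset.card_erase_of_mem hx
          omega
        have hD₁closed : Closed hc D₁ := by
          intro a haD b hbD u hu
          rw [← hy₁D] at haD hbD ⊢
          exact compo_closed hc ha hB hy₁B haD hbD u hu
        have hD₁w : 2 * (∑ i ∈ D₁, w i) ≤ W := by
          have : ∑ i ∈ D₁, w i ≤ ∑ i ∈ B, w i :=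
            Finset.sum_le_sum_of_subset (fun z hz => Finset.mem_of_mem_erase (hD₁sub hz))
          omega
        obtain ⟨z, hzD₁, hsupp', hcomps'⟩ := IH D₁ hD₁card hD₁closed x' hx'D₁ hD₁w
        have hzB : z ∈ B := Finset.mem_of_mem_erase (hD₁sub hzD₁)
        have hxz : pw hc x z = SimpleGraph.Walk.cons hadj (pw hc x' z) := by
          refine (pw_uniq hc ha _ ?_).symm
          rw [SimpleGraph.Walk.cons_isPath_iff]
          refine ⟨pw_isPath hc x' z, ?_⟩
          intro hmem
          have : x ∈ D₁ := hsupp' x hmem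
          exact (Finset.mem_erase.mp (hD₁sub this)).1 rfl
        refine ⟨z, hzB, ?_, ?_⟩
        · intro u hu
          rw [hxz, SimpleGraph.Walk.support_cons] at hu
          rcases List.mem_cons.mp hu with rfl | hu'
          · exact hx
          · exact Finset.mem_of_mem_erase (hD₁sub (hsupp' u hu'))
        · intro y hy hynot
          have hyx : y ≠ x := by
            intro h; subst h
            exact hynot (SimpleGraph.Walk.start_mem_support _)
          have hxP : x ∈ (pw hc x z).support.toFinset := by
            rw [List.mem_toFinset]
            exact SimpleGraph.Walk.start_mem_support _
          by_cases hyD₁ : y ∈ D₁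
          · -- inside D₁ : use recursive bound
            have hy' : y ∉ (pw hc x' z).support := by
              intro h
              apply hynot
              rw [hxz, SimpleGraph.Walk.support_cons]
              exact List.mem_cons_of_mem _ h
            have hsub2 : compo hc B (pw hc x z).support.toFinset y ⊆
                compo hc D₁ (pw hc x' z).support.toFinset y := by
              intro u hu
              rw [mem_compo] at hu
              have huD₁ : u ∈ D₁ := by
                have hu2 : u ∈ compo hc B {x} y := by
                  rw [mem_compo]
                  refine ⟨hu.1, ?_⟩
                  intro v hv hvx
                  rw [Finset.mem_singleton] at hvx
                  subst hvx
                  exact hu.2 v hv hxP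
                have : compo hc B {x} y = D₁ := by
                  rw [← hy₁D]
                  exact compo_eq_of_mem hc ha hy₁B (hy₁D ▸ hyD₁)
                rwa [this] at hu2
              rw [mem_compo]
              refine ⟨huD₁, ?_⟩
              intro v hv hvP
              refine hu.2 v hv ?_
              rw [List.mem_toFinset] at hvP ⊢
              rw [hxz, SimpleGraph.Walk.support_cons]
              exact List.mem_cons_of_mem _ hvP
            have := Finset.sum_le_sum_of_subset (f := w) hsub2
            have hrec := hcomps' y hyD₁ hy'
            omega
          · -- a different component of x
            set Cy := compo hc B {x} y with hCy
            have hyCy : y ∈ Cy := self_mem_compo hc ha hy (by simpa using hyx)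
            have hCymem : Cy ∈ CP :=
              Finset.mem_image.mpr ⟨y, Finset.mem_erase.mpr ⟨hyx, hy⟩, rfl⟩
            have hCyne : Cy ≠ D₁ := by
              intro h
              rw [← h] at hyD₁
              exact hyD₁ hyCy
            have hdisj : Disjoint Cy D₁ := by
              by_contra hnd
              rw [← hy₁D] at hnd
              exact hCyne (by rw [← hy₁D]; exact compo_eq_of_not_disjoint hc ha hy hy₁B hnd)
            have hsum : (∑ i ∈ Cy, w i) + (∑ i ∈ D₁, w i) ≤ ∑ i ∈ B, w i := by
              rw [← Finset.sum_union hdisj]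
              refine Finset.sum_le_sum_of_subset ?_
              intro u hu
              rcases Finset.mem_union.mp hu with h | h
              · exact compo_subset h
              · exact Finset.mem_of_mem_erase (hD₁sub h)
            have hmax := hD₁max _ hCymem
            have hsub3 : compo hc B (pw hc x z).support.toFinset y ⊆ Cy := by
              rw [hCy]
              refine compo_mono hc ?_ y
              intro u hu
              rw [Finset.mem_singleton] at hu
              subst hu
              exact hxP
            have := Finset.sum_le_sum_of_subset (f := w) hsub3
            omega

end TwPw

namespace TwPw

variable {ι : Type} {T : SimpleGraph ι}

/-- Spine lemma: there is a path such that every component of its complement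
has at most a third of the total weight. -/
lemma spine (hc : T.Connected) (ha : T.IsAcyclic) {A : Finset ι} (hA : Closed hc A)
    (hne : A.Nonempty) (w : ι → ℕ) :
    ∃ p ∈ A, ∃ q ∈ A, (∀ u ∈ (pw hc p q).support, u ∈ A) ∧
      ∀ y ∈ A, y ∉ (pw hc p q).support →
        3 * (∑ i ∈ compo hc A (pw hc p q).support.toFinset y, w i) ≤ ∑ i ∈ A, w i := by
  obtain ⟨c, hcA, hcent⟩ := centroid hc ha hA hne w
  by_cases hE : A.erase c = ∅
  · refine ⟨c, hcA, c, hcA, ?_, ?_⟩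
    · intro u hu
      rw [support_pw_refl hc ha, List.mem_singleton] at hu
      subst hu; exact hcA
    · intro y hy hynot
      exfalso
      apply hynot
      rw [support_pw_refl hc ha, List.mem_singleton]
      by_contra hne'
      have : y ∈ A.erase c := Finset.mem_erase.mpr ⟨hne', hy⟩
      rw [hE] at this
      simpa using this
  · have hEne : (A.erase c).Nonempty := Finset.nonempty_of_ne_empty hE
    set CA := (A.erase c).image (fun y => compo hc A {c} y) with hCA
    have hCAne : CA.Nonempty := hEne.image _
    obtain ⟨C₁, hC₁mem, hC₁max⟩ := Finset.exists_max_image CA (fun C => ∑ i ∈ C, w i) hCAne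
    obtain ⟨y₁, hy₁E, hy₁C⟩ := Finset.mem_image.mp hC₁mem
    have hy₁A : y₁ ∈ A := Finset.mem_of_mem_erase hy₁E
    have hy₁c : y₁ ≠ c := (Finset.mem_erase.mp hy₁E).1
    have hC₁sub : C₁ ⊆ A.erase c := by
      intro u hu
      rw [← hy₁C] at hu
      refine Finset.mem_erase.mpr ⟨?_, compo_subset hu⟩
      intro h
      exact (not_mem_P_of_mem_compo hc hu) (by rw [h]; exact Finset.mem_singleton_self c)
    have hC₁closed : Closed hc C₁ := by
      intro a haD b hbD u hu
      rw [← hy₁C] at haD hbD ⊢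
      exact compo_closed hc ha hA hy₁A haD hbD u hu
    have hC₁w : 2 * (∑ i ∈ C₁, w i) ≤ ∑ i ∈ A, w i := by
      rw [← hy₁C]
      exact hcent y₁ hy₁A hy₁c
    obtain ⟨x₁, hadj₁, hdecomp₁, hx₁compo, hnotmem₁⟩ :=
      snd_mem_compo hc ha hA hcA hy₁A (fun h => hy₁c h.symm)
    have hx₁C₁ : x₁ ∈ C₁ := by rw [← hy₁C]; exact hx₁compo
    obtain ⟨z₁, hz₁C₁, hsupp₁, hcomps₁⟩ :=
      descent hc ha w (∑ i ∈ A, w i) C₁.card C₁ le_rfl hC₁closed x₁ hx₁C₁ hC₁w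
    have hz₁A : z₁ ∈ A := Finset.mem_of_mem_erase (hC₁sub hz₁C₁)
    have hcz₁ : pw hc c z₁ = SimpleGraph.Walk.cons hadj₁ (pw hc x₁ z₁) := by
      refine (pw_uniq hc ha _ ?_).symm
      rw [SimpleGraph.Walk.cons_isPath_iff]
      refine ⟨pw_isPath hc x₁ z₁, ?_⟩
      intro hmem
      exact (Finset.mem_erase.mp (hC₁sub (hsupp₁ c hmem))).1 rfl
    have hsuppx₁ : ∀ v ∈ (pw hc x₁ z₁).support, v ∈ (pw hc c z₁).support := by
      intro v hv
      rw [hcz₁, SimpleGraph.Walk.support_cons]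
      exact List.mem_cons_of_mem _ hv
    by_cases hE2 : CA.erase C₁ = ∅
    · -- single big component : spine from z₁ to c
      refine ⟨z₁, hz₁A, c, hcA, ?_, ?_⟩
      · intro u hu
        rw [mem_support_pw_rev hc ha] at hu
        exact hA c hcA z₁ hz₁A u hu
      · intro y hy hynot
        have hcP : c ∈ (pw hc z₁ c).support := SimpleGraph.Walk.end_mem_support _
        have hx₁P : ∀ v ∈ (pw hc x₁ z₁).support, v ∈ (pw hc z₁ c).support := by
          intro v hv
          rw [mem_support_pw_rev hc ha]
          exact hsuppx₁ v hv
        have hyc : y ≠ c := by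
          intro h; subst h; exact hynot hcP
        have hyCy : y ∈ compo hc A {c} y := self_mem_compo hc ha hy (by simpa using hyc)
        have hCymem : compo hc A {c} y ∈ CA :=
          Finset.mem_image.mpr ⟨y, Finset.mem_erase.mpr ⟨hyc, hy⟩, rfl⟩
        have hCyC₁ : compo hc A {c} y = C₁ := by
          by_contra hne'
          have : compo hc A {c} y ∈ CA.erase C₁ := Finset.mem_erase.mpr ⟨hne', hCymem⟩
          rw [hE2] at this
          simpa using this
        have hyC₁ : y ∈ C₁ := by rw [← hCyC₁]; exact hyCy
        have hynot' : y ∉ (pw hc x₁ z₁).support := fun h => hynot (hx₁P y h)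
        have hsub : compo hc A (pw hc z₁ c).support.toFinset y ⊆
            compo hc C₁ (pw hc x₁ z₁).support.toFinset y := by
          intro u hu
          rw [mem_compo] at hu
          have huC₁ : u ∈ C₁ := by
            have hu2 : u ∈ compo hc A {c} y := by
              rw [mem_compo]
              refine ⟨hu.1, ?_⟩
              intro v hv hvc
              rw [Finset.mem_singleton] at hvc
              subst hvc
              exact hu.2 v hv (List.mem_toFinset.mpr hcP)
            rwa [hCyC₁] at hu2
          rw [mem_compo]
          refine ⟨huC₁, ?_⟩
          intro v hv hvP
          exact hu.2 v hv (List.mem_toFinset.mpr (hx₁P v (List.mem_toFinset.mp hvP)))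
        have h1 := Finset.sum_le_sum_of_subset (f := w) hsub
        have h2 := hcomps₁ y hyC₁ hynot'
        omega
    · -- two components : spine from z₁ to z₂
      have hE2ne : (CA.erase C₁).Nonempty := Finset.nonempty_of_ne_empty hE2
      obtain ⟨C₂, hC₂mem, hC₂max⟩ :=
        Finset.exists_max_image (CA.erase C₁) (fun C => ∑ i ∈ C, w i) hE2ne
      have hC₂CA : C₂ ∈ CA := Finset.mem_of_mem_erase hC₂mem
      have hC₂ne : C₂ ≠ C₁ := (Finset.mem_erase.mp hC₂mem).1
      obtain ⟨y₂, hy₂E, hy₂C⟩ := Finset.mem_image.mp hC₂CA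
      have hy₂A : y₂ ∈ A := Finset.mem_of_mem_erase hy₂E
      have hy₂c : y₂ ≠ c := (Finset.mem_erase.mp hy₂E).1
      have hC₂sub : C₂ ⊆ A.erase c := by
        intro u hu
        rw [← hy₂C] at hu
        refine Finset.mem_erase.mpr ⟨?_, compo_subset hu⟩
        intro h
        exact (not_mem_P_of_mem_compo hc hu) (by rw [h]; exact Finset.mem_singleton_self c)
      have hC₂closed : Closed hc C₂ := by
        intro a haD b hbD u hu
        rw [← hy₂C] at haD hbD ⊢
        exact compo_closed hc ha hA hy₂A haD hbD u hu
      have hC₂w : 2 * (∑ i ∈ C₂, w i) ≤ ∑ i ∈ A, w i := by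
        rw [← hy₂C]
        exact hcent y₂ hy₂A hy₂c
      obtain ⟨x₂, hadj₂, hdecomp₂, hx₂compo, hnotmem₂⟩ :=
        snd_mem_compo hc ha hA hcA hy₂A (fun h => hy₂c h.symm)
      have hx₂C₂ : x₂ ∈ C₂ := by rw [← hy₂C]; exact hx₂compo
      obtain ⟨z₂, hz₂C₂, hsupp₂, hcomps₂⟩ :=
        descent hc ha w (∑ i ∈ A, w i) C₂.card C₂ le_rfl hC₂closed x₂ hx₂C₂ hC₂w
      have hz₂A : z₂ ∈ A := Finset.mem_of_mem_erase (hC₂sub hz₂C₂)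
      have hcz₂ : pw hc c z₂ = SimpleGraph.Walk.cons hadj₂ (pw hc x₂ z₂) := by
        refine (pw_uniq hc ha _ ?_).symm
        rw [SimpleGraph.Walk.cons_isPath_iff]
        refine ⟨pw_isPath hc x₂ z₂, ?_⟩
        intro hmem
        exact (Finset.mem_erase.mp (hC₂sub (hsupp₂ c hmem))).1 rfl
      have hsuppx₂ : ∀ v ∈ (pw hc x₂ z₂).support, v ∈ (pw hc c z₂).support := by
        intro v hv
        rw [hcz₂, SimpleGraph.Walk.support_cons]
        exact List.mem_cons_of_mem _ hv
      have hdisj12 : Disjoint C₁ C₂ := by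
        by_contra hnd
        apply hC₂ne
        rw [← hy₁C, ← hy₂C] at hnd ⊢
        exact (compo_eq_of_not_disjoint hc ha hy₁A hy₂A hnd).symm
      have hsuppz₁c : ∀ u ∈ (pw hc z₁ c).support, u = c ∨ u ∈ C₁ := by
        intro u hu
        rw [mem_support_pw_rev hc ha, hcz₁, SimpleGraph.Walk.support_cons] at hu
        rcases List.mem_cons.mp hu with h | h
        · exact Or.inl h
        · exact Or.inr (hsupp₁ u h)
      have hsuppcz₂ : ∀ u ∈ (pw hc c z₂).support, u = c ∨ u ∈ C₂ := by
        intro u hu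
        rw [hcz₂, SimpleGraph.Walk.support_cons] at hu
        rcases List.mem_cons.mp hu with h | h
        · exact Or.inl h
        · exact Or.inr (hsupp₂ u h)
      have hkey : (pw hc z₁ c).append (pw hc c z₂) = pw hc z₁ z₂ := by
        refine pw_uniq hc ha _ ?_
        refine isPath_append hc (pw_isPath hc z₁ c) (pw_isPath hc c z₂) ?_
        intro u hu1 hu2
        rcases hsuppz₁c u hu1 with h | h
        · exact h
        · rcases hsuppcz₂ u hu2 with h' | h'
          · exact h'
          · exact absurd (Finset.mem_of_mem_erase (hC₂sub h'))
              (fun _ => (Finset.disjoint_left.mp hdisj12 h) h')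
      have hmemP : ∀ u, u ∈ (pw hc z₁ z₂).support ↔
          (u ∈ (pw hc z₁ c).support ∨ u ∈ (pw hc c z₂).support) := by
        intro u
        rw [← hkey, SimpleGraph.Walk.mem_support_append_iff]
      have hcP : c ∈ (pw hc z₁ z₂).support := by
        rw [hmemP]
        exact Or.inl (SimpleGraph.Walk.end_mem_support _)
      have hx₁P : ∀ v ∈ (pw hc x₁ z₁).support, v ∈ (pw hc z₁ z₂).support := by
        intro v hv
        rw [hmemP]
        left
        rw [mem_support_pw_rev hc ha]
        exact hsuppx₁ v hv
      have hx₂P : ∀ v ∈ (pw hc x₂ z₂).support, v ∈ (pw hc z₁ z₂).support := by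
        intro v hv
        rw [hmemP]
        exact Or.inr (hsuppx₂ v hv)
      refine ⟨z₁, hz₁A, z₂, hz₂A, ?_, ?_⟩
      · intro u hu
        rw [hmemP] at hu
        rcases hu with h | h
        · rcases hsuppz₁c u h with rfl | h'
          · exact hcA
          · exact Finset.mem_of_mem_erase (hC₁sub h')
        · rcases hsuppcz₂ u h with rfl | h'
          · exact hcA
          · exact Finset.mem_of_mem_erase (hC₂sub h')
      · intro y hy hynot
        have hyc : y ≠ c := by
          intro h; subst h; exact hynot hcP
        by_cases hyC₁ : y ∈ C₁
        · have hynot' : y ∉ (pw hc x₁ z₁).support := fun h => hynot (hx₁P y h)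
          have hsub : compo hc A (pw hc z₁ z₂).support.toFinset y ⊆
              compo hc C₁ (pw hc x₁ z₁).support.toFinset y := by
            intro u hu
            rw [mem_compo] at hu
            have huC₁ : u ∈ C₁ := by
              have hu2 : u ∈ compo hc A {c} y := by
                rw [mem_compo]
                refine ⟨hu.1, ?_⟩
                intro v hv hvc
                rw [Finset.mem_singleton] at hvc
                subst hvc
                exact hu.2 v hv (List.mem_toFinset.mpr hcP)
              have : compo hc A {c} y = C₁ := by
                rw [← hy₁C]
                exact compo_eq_of_mem hc ha hy₁A (hy₁C ▸ hyC₁)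
              rwa [this] at hu2
            rw [mem_compo]
            refine ⟨huC₁, ?_⟩
            intro v hv hvP
            exact hu.2 v hv (List.mem_toFinset.mpr (hx₁P v (List.mem_toFinset.mp hvP)))
          have h1 := Finset.sum_le_sum_of_subset (f := w) hsub
          have h2 := hcomps₁ y hyC₁ hynot'
          omega
        · by_cases hyC₂ : y ∈ C₂
          · have hynot' : y ∉ (pw hc x₂ z₂).support := fun h => hynot (hx₂P y h)
            have hsub : compo hc A (pw hc z₁ z₂).support.toFinset y ⊆
                compo hc C₂ (pw hc x₂ z₂).support.toFinset y := by
              intro u hu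
              rw [mem_compo] at hu
              have huC₂ : u ∈ C₂ := by
                have hu2 : u ∈ compo hc A {c} y := by
                  rw [mem_compo]
                  refine ⟨hu.1, ?_⟩
                  intro v hv hvc
                  rw [Finset.mem_singleton] at hvc
                  subst hvc
                  exact hu.2 v hv (List.mem_toFinset.mpr hcP)
                have : compo hc A {c} y = C₂ := by
                  rw [← hy₂C]
                  exact compo_eq_of_mem hc ha hy₂A (hy₂C ▸ hyC₂)
                rwa [this] at hu2
              rw [mem_compo]
              refine ⟨huC₂, ?_⟩
              intro v hv hvP
              exact hu.2 v hv (List.mem_toFinset.mpr (hx₂P v (List.mem_toFinset.mp hvP)))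
            have h1 := Finset.sum_le_sum_of_subset (f := w) hsub
            have h2 := hcomps₂ y hyC₂ hynot'
            omega
          · -- third component
            set Cy := compo hc A {c} y with hCydef
            have hyCy : y ∈ Cy := self_mem_compo hc ha hy (by simpa using hyc)
            have hCymem : Cy ∈ CA :=
              Finset.mem_image.mpr ⟨y, Finset.mem_erase.mpr ⟨hyc, hy⟩, rfl⟩
            have hCyne1 : Cy ≠ C₁ := fun h => hyC₁ (h ▸ hyCy)
            have hCyne2 : Cy ≠ C₂ := fun h => hyC₂ (h ▸ hyCy)
            have hCymax := hC₂max _ (Finset.mem_erase.mpr ⟨hCyne1, hCymem⟩)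
            have hdisj1y : Disjoint C₁ Cy := by
              by_contra hnd
              apply hCyne1
              rw [← hy₁C, hCydef] at hnd ⊢
              exact (compo_eq_of_not_disjoint hc ha hy₁A hy hnd).symm
            have hdisj2y : Disjoint C₂ Cy := by
              by_contra hnd
              apply hCyne2
              rw [← hy₂C, hCydef] at hnd ⊢
              exact (compo_eq_of_not_disjoint hc ha hy₂A hy hnd).symm
            have hsum3 : (∑ i ∈ C₁, w i) + (∑ i ∈ C₂, w i) + (∑ i ∈ Cy, w i)
                ≤ ∑ i ∈ A, w i := by
              rw [← Finset.sum_union hdisj12,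
                ← Finset.sum_union (Finset.disjoint_union_left.mpr ⟨hdisj1y, hdisj2y⟩)]
              refine Finset.sum_le_sum_of_subset ?_
              intro u hu
              rcases Finset.mem_union.mp hu with hu | hu
              · rcases Finset.mem_union.mp hu with hu | hu
                · exact Finset.mem_of_mem_erase (hC₁sub hu)
                · exact Finset.mem_of_mem_erase (hC₂sub hu)
              · exact compo_subset hu
            have hC1ge := hC₁max _ hCymem
            have hsub : compo hc A (pw hc z₁ z₂).support.toFinset y ⊆ Cy := by
              rw [hCydef]
              refine compo_mono hc ?_ y
              intro u hu
              rw [Finset.mem_singleton] at hu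
              subst hu
              exact List.mem_toFinset.mpr hcP
            have h1 := Finset.sum_le_sum_of_subset (f := w) hsub
            omega

end TwPw

namespace TwPw

variable {ι V : Type} {T : SimpleGraph ι}

/-- A "split form": occurrences of `v` in the list form a contiguous block. -/
def SplitF (v : V) (L : List (Finset V)) : Prop :=
  ∃ pre mid post : List (Finset V), L = pre ++ mid ++ post ∧
    (∀ s ∈ pre, v ∉ s) ∧ (∀ s ∈ mid, v ∈ s) ∧ (∀ s ∈ post, v ∉ s)

/-- Required properties of a recursively obtained path decomposition. -/
def Props (X : ι → Finset V) (t d : ℕ) (R : Finset V) (C : Finset ι) (j : ι)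
    (L : List (Finset V)) : Prop :=
  L ≠ [] ∧ (∀ i ∈ C, ∃ s ∈ L, X i ⊆ s) ∧ (∀ s ∈ L, s ⊆ C.biUnion X) ∧
    (∀ s ∈ L, (s \ (R ∪ X j)).card ≤ (t + 1) * d) ∧ (∀ v : V, SplitF v L)

noncomputable def chunk (X : ι → Finset V) (t d : ℕ) (R : Finset V) (C : Finset ι)
    (j : ι) : List (Finset V) :=
  if h : ∃ L, Props X t d R C j L then h.choose else []

lemma chunk_props {X : ι → Finset V} {t d : ℕ} {R : Finset V} {C : Finset ι} {j : ι}
    (h : ∃ L, Props X t d R C j L) : Props X t d R C j (chunk X t d R C j) := by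
  rw [chunk, dif_pos h]
  exact h.choose_spec

lemma split_flatten {v : V} : ∀ (Ls : List (List (Finset V))),
    (∀ l ∈ Ls, SplitF v l) →
    List.Pairwise (fun l l' => (∃ s ∈ l, v ∈ s) → (∃ s ∈ l', v ∈ s) → False) Ls →
    SplitF v Ls.flatten := by
  intro Ls
  induction Ls with
  | nil => intro _ _; exact ⟨[], [], [], by simp, by simp, by simp, by simp⟩
  | cons l Ls ih =>
    intro hall hpw
    rw [List.pairwise_cons] at hpw
    obtain ⟨pre', mid', post', hsplit', hpre', hmid', hpost'⟩ :=
      ih (fun l' hl' => hall l' (List.mem_cons_of_mem _ hl')) hpw.2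
    by_cases hv : ∃ s ∈ l, v ∈ s
    · obtain ⟨pre, mid, post, hsplit, hpre, hmid, hpost⟩ := hall l (List.mem_cons_self)
      refine ⟨pre, mid, post ++ Ls.flatten, ?_, hpre, hmid, ?_⟩
      · rw [List.flatten_cons, hsplit]
        simp [List.append_assoc]
      · intro s hs
        rcases List.mem_append.mp hs with hs | hs
        · exact hpost s hs
        · rw [List.mem_flatten] at hs
          obtain ⟨l', hl', hsl'⟩ := hs
          intro hvs
          exact hpw.1 l' hl' hv ⟨s, hsl', hvs⟩
    · refine ⟨l ++ pre', mid', post', ?_, ?_, hmid', hpost'⟩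
      · rw [List.flatten_cons, hsplit']
        simp [List.append_assoc]
      · intro s hs
        rcases List.mem_append.mp hs with hs | hs
        · exact fun hvs => hv ⟨s, hs, hvs⟩
        · exact hpre' s hs

/-- The list of bags contributed by the spine node `j`. -/
noncomputable def blockFor (hc : T.Connected) (X : ι → Finset V) (t d : ℕ) (R : Finset V)
    (A PF : Finset ι) (j : ι) : List (Finset V) :=
  ((((A \ PF).filter (fun y => att hc PF y = j)).image
      (fun y => compo hc A PF y)).toList.map
    (fun C => (chunk X t d R C j).map (fun s => s ∪ X j))).flatten ++ [X j]

end TwPw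

namespace TwPw

variable {ι V : Type} {T : SimpleGraph ι}

section BlockAsm

variable (hc : T.Connected) (ha : T.IsAcyclic) (X : ι → Finset V) (t d : ℕ)
  (R : Finset V) (A PF : Finset ι)

variable (hPFcl : ∀ a ∈ PF, ∀ b ∈ PF, ∀ x ∈ (pw hc a b).support, x ∈ PF)
  (hPFA : PF ⊆ A) (hAcl : Closed hc A)
  (hattex : ∀ y : ι, ∃ z, IsAtt hc PF y z)
  (hchunk : ∀ y ∈ A, y ∉ PF →
    ∃ L, Props X t d R (compo hc A PF y) (att hc PF y) L)
  (hsize : ∀ i, (X i).card ≤ t + 1)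
  (hSv : ∀ (v : V) (i j : ι), v ∈ X i → v ∈ X j → ∀ x ∈ (pw hc i j).support, v ∈ X x)

-- components listed in block j satisfy chunk properties
include hchunk in
lemma comp_chunk_props {j : ι} {C : Finset ι}
    (hC : C ∈ ((A \ PF).filter (fun y => att hc PF y = j)).image
      (fun y => compo hc A PF y)) :
    Props X t d R C j (chunk X t d R C j) := by
  obtain ⟨y, hy, rfl⟩ := Finset.mem_image.mp hC
  rw [Finset.mem_filter, Finset.mem_sdiff] at hy
  have := hchunk y hy.1.1 hy.1.2
  rw [hy.2] at this
  exact chunk_props this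

include ha hPFcl hattex in
lemma comp_elt_facts {j : ι} {C : Finset ι}
    (hC : C ∈ ((A \ PF).filter (fun y => att hc PF y = j)).image
      (fun y => compo hc A PF y)) :
    C ⊆ A ∧ (∀ u ∈ C, u ∉ PF) ∧ (∀ u ∈ C, att hc PF u = j) ∧
      (∀ u ∈ C, compo hc A PF u = C) := by
  obtain ⟨y, hy, rfl⟩ := Finset.mem_image.mp hC
  rw [Finset.mem_filter, Finset.mem_sdiff] at hy
  refine ⟨compo_subset, fun u hu => not_mem_P_of_mem_compo hc hu, ?_, ?_⟩
  · intro u hu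
    rw [att_comp_const hc ha hPFcl (hattex y) hy.1.1 hu]
    exact hy.2
  · intro u hu
    exact compo_eq_of_mem hc ha hy.1.1 hu

include ha hPFcl hattex hSv in
/-- Key crossing fact: a vertex in bags of a component `C` of block `j` and in a bag
of a node outside `C` lies in the spine bag `X j`. -/
lemma cross_out {j : ι} {C : Finset ι}
    (hC : C ∈ ((A \ PF).filter (fun y => att hc PF y = j)).image
      (fun y => compo hc A PF y))
    {v : V} {u u' : ι} (hu : u ∈ C) (hvu : v ∈ X u)
    (hu'A : u' ∈ A) (hu' : u' ∉ C) (hvu' : v ∈ X u') : v ∈ X j := by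
  obtain ⟨hCA, hCP, hCatt, hCcomp⟩ := comp_elt_facts hc ha A PF hPFcl hattex hC
  have hu'' : u' ∉ compo hc A PF u := by rw [hCcomp u hu]; exact hu'
  have hcr := crossing_of_not_mem_compo hc ha hPFcl hu'A hu''
  have := hSv v u u' hvu hvu' _ hcr
  rwa [hCatt u hu] at this

include ha hPFcl hPFA hAcl hattex hchunk hsize hSv in
lemma blockProps (j : ι) (hj : j ∈ PF) :
    (blockFor hc X t d R A PF j ≠ []) ∧
    (∀ s ∈ blockFor hc X t d R A PF j, s ⊆ A.biUnion X) ∧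
    (∀ s ∈ blockFor hc X t d R A PF j, (s \ R).card ≤ (t + 1) * (d + 1)) ∧
    (X j ∈ blockFor hc X t d R A PF j) ∧
    (∀ i ∈ A, i ∉ PF → att hc PF i = j → ∃ s ∈ blockFor hc X t d R A PF j, X i ⊆ s) ∧
    (∀ v : V, v ∈ X j → ∀ s ∈ blockFor hc X t d R A PF j, v ∈ s) ∧
    (∀ v : V, v ∉ X j → SplitF v (blockFor hc X t d R A PF j)) ∧
    (∀ s ∈ blockFor hc X t d R A PF j, ∀ v ∈ s,
      v ∈ X j ∨ ∃ y, y ∈ A ∧ y ∉ PF ∧ att hc PF y = j ∧ v ∈ X y) := by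
  set CS := ((A \ PF).filter (fun y => att hc PF y = j)).image (fun y => compo hc A PF y)
    with hCS
  -- membership characterisation of the block
  have hmem : ∀ s, s ∈ blockFor hc X t d R A PF j ↔
      (s = X j ∨ ∃ C ∈ CS, ∃ cs ∈ chunk X t d R C j, s = cs ∪ X j) := by
    intro s
    rw [blockFor, List.mem_append, List.mem_flatten]
    constructor
    · rintro (⟨l, hl, hsl⟩ | hs)
      · rw [List.mem_map] at hl
        obtain ⟨C, hC, rfl⟩ := hl
        rw [List.mem_map] at hsl
        obtain ⟨cs, hcs, rfl⟩ := hsl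
        exact Or.inr ⟨C, (Finset.mem_toList).mp hC, cs, hcs, rfl⟩
      · rw [List.mem_singleton] at hs
        exact Or.inl hs
    · rintro (rfl | ⟨C, hC, cs, hcs, rfl⟩)
      · exact Or.inr (List.mem_singleton_self _)
      · refine Or.inl ⟨(chunk X t d R C j).map (fun s => s ∪ X j), ?_, ?_⟩
        · rw [List.mem_map]
          exact ⟨C, (Finset.mem_toList).mpr hC, rfl⟩
        · rw [List.mem_map]
          exact ⟨cs, hcs, rfl⟩
  have hXjA : X j ⊆ A.biUnion X := Finset.subset_biUnion_of_mem X (hPFA hj)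
  refine ⟨?_, ?_, ?_, ?_, ?_, ?_, ?_, ?_⟩
  · -- nonempty
    intro h
    have : X j ∈ blockFor hc X t d R A PF j := (hmem (X j)).mpr (Or.inl rfl)
    rw [h] at this
    simp at this
  · -- subset
    intro s hs
    rcases (hmem s).mp hs with rfl | ⟨C, hC, cs, hcs, rfl⟩
    · exact hXjA
    · have hP := comp_chunk_props hc X t d R A PF hchunk hC
      have h1 : cs ⊆ C.biUnion X := hP.2.2.1 cs hcs
      have hCA : C ⊆ A :=
        (comp_elt_facts hc ha A PF hPFcl hattex hC).1
      intro v hv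
      rcases Finset.mem_union.mp hv with hv | hv
      · exact Finset.biUnion_subset_biUnion_of_subset_left X hCA (h1 hv)
      · exact hXjA hv
  · -- size
    intro s hs
    rcases (hmem s).mp hs with rfl | ⟨C, hC, cs, hcs, rfl⟩
    · calc (X j \ R).card ≤ (X j).card := Finset.card_le_card (Finset.sdiff_subset)
        _ ≤ t + 1 := hsize j
        _ ≤ (t + 1) * (d + 1) := by nlinarith
    · have hP := comp_chunk_props hc X t d R A PF hchunk hC
      have h1 : (cs \ (R ∪ X j)).card ≤ (t + 1) * d := hP.2.2.2.1 cs hcs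
      have hsub : (cs ∪ X j) \ R ⊆ X j ∪ (cs \ (R ∪ X j)) := by
        intro v hv
        rw [Finset.mem_sdiff, Finset.mem_union] at hv
        by_cases hvj : v ∈ X j
        · exact Finset.mem_union_left _ hvj
        · refine Finset.mem_union_right _ ?_
          rw [Finset.mem_sdiff, Finset.mem_union]
          refine ⟨hv.1.resolve_right hvj, ?_⟩
          push_neg
          exact ⟨hv.2, hvj⟩
      calc ((cs ∪ X j) \ R).card ≤ (X j ∪ (cs \ (R ∪ X j))).card := Finset.card_le_card hsub
        _ ≤ (X j).card + (cs \ (R ∪ X j)).card := Finset.card_union_le _ _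
        _ ≤ (t + 1) + (t + 1) * d := by
            have := hsize j
            omega
        _ = (t + 1) * (d + 1) := by ring
  · exact (hmem (X j)).mpr (Or.inl rfl)
  · -- coverage of components
    intro i hiA hiPF hatti
    have hiC : compo hc A PF i ∈ CS := by
      rw [hCS]
      refine Finset.mem_image.mpr ⟨i, ?_, rfl⟩
      rw [Finset.mem_filter, Finset.mem_sdiff]
      exact ⟨⟨hiA, hiPF⟩, hatti⟩
    have hP := comp_chunk_props hc X t d R A PF hchunk hiC
    have hiself : i ∈ compo hc A PF i := self_mem_compo hc ha hiA hiPF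
    obtain ⟨s, hs, hXs⟩ := hP.2.1 i hiself
    refine ⟨s ∪ X j, (hmem _).mpr (Or.inr ⟨_, hiC, s, hs, rfl⟩), ?_⟩
    exact hXs.trans (Finset.subset_union_left)
  · -- spine bag vertices in all slots
    intro v hv s hs
    rcases (hmem s).mp hs with rfl | ⟨C, hC, cs, hcs, rfl⟩
    · exact hv
    · exact Finset.mem_union_right _ hv
  · -- split form for non-spine vertices
    intro v hv
    rw [blockFor]
    have hflat : SplitF v ((CS.toList.map
        (fun C => (chunk X t d R C j).map (fun s => s ∪ X j))).flatten) := by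
      refine split_flatten _ ?_ ?_
      · intro l hl
        rw [List.mem_map] at hl
        obtain ⟨C, hC, rfl⟩ := hl
        have hP := comp_chunk_props hc X t d R A PF hchunk
          ((Finset.mem_toList).mp hC)
        obtain ⟨pre, mid, post, hsplit, hpre, hmid, hpost⟩ := hP.2.2.2.2 v
        refine ⟨pre.map (fun s => s ∪ X j), mid.map (fun s => s ∪ X j),
          post.map (fun s => s ∪ X j), by rw [hsplit]; simp, ?_, ?_, ?_⟩
        · intro s hs
          rw [List.mem_map] at hs
          obtain ⟨s₀, hs₀, rfl⟩ := hs
          intro hmem'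
          rcases Finset.mem_union.mp hmem' with h | h
          · exact hpre s₀ hs₀ h
          · exact hv h
        · intro s hs
          rw [List.mem_map] at hs
          obtain ⟨s₀, hs₀, rfl⟩ := hs
          exact Finset.mem_union_left _ (hmid s₀ hs₀)
        · intro s hs
          rw [List.mem_map] at hs
          obtain ⟨s₀, hs₀, rfl⟩ := hs
          intro hmem'
          rcases Finset.mem_union.mp hmem' with h | h
          · exact hpost s₀ hs₀ h
          · exact hv h
      · -- pairwise : v appears in at most one component chunk
        have hnodup : CS.toList.Nodup := Finset.nodup_toList _
        have hpair : CS.toList.Pairwise (fun C C' => C ∈ CS ∧ C' ∈ CS ∧ C ≠ C') := by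
          refine List.Pairwise.imp_of_mem ?_ hnodup
          intro a b haa hbb hne
          exact ⟨Finset.mem_toList.mp haa, Finset.mem_toList.mp hbb, hne⟩
        refine List.Pairwise.map _ ?_ hpair
        rintro C C' ⟨hCmem, hC'mem, hCne⟩ hvC hvC'
        obtain ⟨s, hs, hvs⟩ := hvC
        obtain ⟨s', hs', hvs'⟩ := hvC'
        rw [List.mem_map] at hs hs'
        obtain ⟨cs, hcs, rfl⟩ := hs
        obtain ⟨cs', hcs', rfl⟩ := hs'
        have hvcs : v ∈ cs := (Finset.mem_union.mp hvs).resolve_right hv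
        have hvcs' : v ∈ cs' := (Finset.mem_union.mp hvs').resolve_right hv
        have hPC := comp_chunk_props hc X t d R A PF hchunk hCmem
        have hPC' := comp_chunk_props hc X t d R A PF hchunk hC'mem
        obtain ⟨u, huC, hvu⟩ := Finset.mem_biUnion.mp (hPC.2.2.1 cs hcs hvcs)
        obtain ⟨u', hu'C', hvu'⟩ := Finset.mem_biUnion.mp (hPC'.2.2.1 cs' hcs' hvcs')
        have factsC := comp_elt_facts hc ha A PF hPFcl hattex hCmem
        have factsC' := comp_elt_facts hc ha A PF hPFcl hattex hC'mem
        have hu'A : u' ∈ A := factsC'.1 hu'C'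
        by_cases hu'C : u' ∈ C
        · exact hCne ((factsC.2.2.2 u' hu'C).symm.trans (factsC'.2.2.2 u' hu'C'))
        · exact hv (cross_out hc ha X A PF hPFcl hattex hSv hCmem huC hvu hu'A hu'C hvu')
    obtain ⟨pre, mid, post, hsplit, hpre, hmid, hpost⟩ := hflat
    refine ⟨pre, mid, post ++ [X j], by rw [hsplit]; simp, hpre, hmid, ?_⟩
    intro s hs
    rcases List.mem_append.mp hs with hs | hs
    · exact hpost s hs
    · rw [List.mem_singleton] at hs
      subst hs
      exact hv
  · -- witness of membership
    intro s hs v hv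
    rcases (hmem s).mp hs with rfl | ⟨C, hC, cs, hcs, rfl⟩
    · exact Or.inl hv
    · rcases Finset.mem_union.mp hv with hv | hv
      · have hP := comp_chunk_props hc X t d R A PF hchunk hC
        have := hP.2.2.1 cs hcs hv
        obtain ⟨y, hyC, hvy⟩ := Finset.mem_biUnion.mp this
        obtain ⟨hCA, hCP, hCatt, _⟩ :=
          comp_elt_facts hc ha A PF hPFcl hattex hC
        exact Or.inr ⟨y, hCA hyC, hCP y hyC, hCatt y hyC, hvy⟩
      · exact Or.inl hv

end BlockAsm

end TwPw

namespace TwPw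

variable {ι V : Type} {T : SimpleGraph ι}

/-- Path decomposition associated to a spine walk. -/
noncomputable def walkPD (hc : T.Connected) (X : ι → Finset V) (t d : ℕ) (R : Finset V)
    (A PF : Finset ι) {a q : ι} (ω : T.Walk a q) : List (Finset V) :=
  (ω.support.map (blockFor hc X t d R A PF)).flatten

lemma walkPD_nil (hc : T.Connected) (X : ι → Finset V) (t d : ℕ) (R : Finset V)
    (A PF : Finset ι) (q : ι) :
    walkPD hc X t d R A PF (SimpleGraph.Walk.nil : T.Walk q q) =
      blockFor hc X t d R A PF q := by
  simp [walkPD]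

lemma walkPD_cons (hc : T.Connected) (X : ι → Finset V) (t d : ℕ) (R : Finset V)
    (A PF : Finset ι) {a b q : ι} (h : T.Adj a b) (ω' : T.Walk b q) :
    walkPD hc X t d R A PF (SimpleGraph.Walk.cons h ω') =
      blockFor hc X t d R A PF a ++ walkPD hc X t d R A PF ω' := by
  simp [walkPD]

section BlockAsm2

variable (hc : T.Connected) (ha : T.IsAcyclic) (X : ι → Finset V) (t d : ℕ)
  (R : Finset V) (A PF : Finset ι)

variable (hPFcl : ∀ a ∈ PF, ∀ b ∈ PF, ∀ x ∈ (pw hc a b).support, x ∈ PF)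
  (hPFA : PF ⊆ A) (hAcl : Closed hc A)
  (hattex : ∀ y : ι, ∃ z, IsAtt hc PF y z)
  (hchunk : ∀ y ∈ A, y ∉ PF →
    ∃ L, Props X t d R (compo hc A PF y) (att hc PF y) L)
  (hsize : ∀ i, (X i).card ≤ t + 1)
  (hSv : ∀ (v : V) (i j : ι), v ∈ X i → v ∈ X j → ∀ x ∈ (pw hc i j).support, v ∈ X x)

include ha hPFcl hPFA hAcl hattex hchunk hsize hSv in
lemma asm : ∀ {q a : ι} (ω : T.Walk a q), ω.IsPath → (∀ x ∈ ω.support, x ∈ PF) →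
    (∀ s ∈ walkPD hc X t d R A PF ω, s ⊆ A.biUnion X) ∧
    (∀ s ∈ walkPD hc X t d R A PF ω, (s \ R).card ≤ (t + 1) * (d + 1)) ∧
    (∀ i ∈ A, (i ∈ ω.support ∨ (i ∉ PF ∧ att hc PF i ∈ ω.support)) →
      ∃ s ∈ walkPD hc X t d R A PF ω, X i ⊆ s) ∧
    (∀ s ∈ walkPD hc X t d R A PF ω, ∀ v ∈ s, ∃ y, v ∈ X y ∧ y ∈ A ∧
      (y ∈ ω.support ∨ (y ∉ PF ∧ att hc PF y ∈ ω.support))) ∧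
    (∀ v : V, ∃ pre mid post : List (Finset V),
      walkPD hc X t d R A PF ω = pre ++ mid ++ post ∧
      (∀ s ∈ pre, v ∉ s) ∧ (∀ s ∈ mid, v ∈ s) ∧ (∀ s ∈ post, v ∉ s) ∧
      (v ∈ X a → pre = [])) := by
  intro q a ω
  induction ω with
  | nil =>
    intro hω hsup
    rename_i q'
    have hq : q' ∈ PF := hsup q' (SimpleGraph.Walk.start_mem_support _)
    obtain ⟨bne, bsub, bsize, bXj, bcov, ball, bsplit, bwit⟩ :=
      blockProps hc ha X t d R A PF hPFcl hPFA hAcl hattex hchunk hsize hSv q' hq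
    rw [walkPD_nil]
    refine ⟨bsub, bsize, ?_, ?_, ?_⟩
    · intro i hiA hi
      simp only [SimpleGraph.Walk.support_nil, List.mem_singleton] at hi
      rcases hi with rfl | ⟨hiPF, rfl⟩
      · exact ⟨X i, bXj, subset_rfl⟩
      · exact bcov i hiA hiPF rfl
    · intro s hs v hv
      rcases bwit s hs v hv with hvq | ⟨y, hyA, hyPF, hyatt, hvy⟩
      · exact ⟨q', hvq, hPFA hq, by simp⟩
      · exact ⟨y, hvy, hyA, Or.inr ⟨hyPF, by simp [hyatt]⟩⟩
    · intro v
      by_cases hv : v ∈ X q'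
      · exact ⟨[], blockFor hc X t d R A PF q', [], by simp, by simp,
          fun s hs => ball v hv s hs, by simp, fun _ => rfl⟩
      · obtain ⟨pre, mid, post, hsplit, h1, h2, h3⟩ := bsplit v hv
        exact ⟨pre, mid, post, hsplit, h1, h2, h3, fun h => absurd h hv⟩
  | @cons a b q h ω' ih =>
    intro hω hsup
    have hω' : ω'.IsPath := hω.of_cons
    have hsup' : ∀ x ∈ ω'.support, x ∈ PF := by
      intro x hx
      exact hsup x (by rw [SimpleGraph.Walk.support_cons]; exact List.mem_cons_of_mem _ hx)
    have haPF : a ∈ PF := hsup a (SimpleGraph.Walk.start_mem_support _)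
    have hanot : a ∉ ω'.support := by
      have := hω.support_nodup
      rw [SimpleGraph.Walk.support_cons] at this
      exact (List.nodup_cons.mp this).1
    obtain ⟨tsub, tsize, tcov, twit, tsplit⟩ := ih hω' hsup'
    obtain ⟨bne, bsub, bsize, bXj, bcov, ball, bsplit, bwit⟩ :=
      blockProps hc ha X t d R A PF hPFcl hPFA hAcl hattex hchunk hsize hSv a haPF
    rw [walkPD_cons]
    have hmemsplit : ∀ s, s ∈ blockFor hc X t d R A PF a ++ walkPD hc X t d R A PF ω' ↔
        (s ∈ blockFor hc X t d R A PF a ∨ s ∈ walkPD hc X t d R A PF ω') := fun s =>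
      List.mem_append
    refine ⟨?_, ?_, ?_, ?_, ?_⟩
    · intro s hs
      rcases (hmemsplit s).mp hs with hs | hs
      · exact bsub s hs
      · exact tsub s hs
    · intro s hs
      rcases (hmemsplit s).mp hs with hs | hs
      · exact bsize s hs
      · exact tsize s hs
    · intro i hiA hi
      rw [SimpleGraph.Walk.support_cons] at hi
      rcases hi with hi | ⟨hiPF, hiatt⟩
      · rcases List.mem_cons.mp hi with rfl | hi
        · exact ⟨X i, (hmemsplit _).mpr (Or.inl bXj), subset_rfl⟩
        · obtain ⟨s, hs, hXs⟩ := tcov i hiA (Or.inl hi)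
          exact ⟨s, (hmemsplit s).mpr (Or.inr hs), hXs⟩
      · rcases List.mem_cons.mp hiatt with hiatt | hiatt
        · obtain ⟨s, hs, hXs⟩ := bcov i hiA hiPF hiatt
          exact ⟨s, (hmemsplit s).mpr (Or.inl hs), hXs⟩
        · obtain ⟨s, hs, hXs⟩ := tcov i hiA (Or.inr ⟨hiPF, hiatt⟩)
          exact ⟨s, (hmemsplit s).mpr (Or.inr hs), hXs⟩
    · intro s hs v hv
      rw [SimpleGraph.Walk.support_cons]
      rcases (hmemsplit s).mp hs with hs | hs
      · rcases bwit s hs v hv with hva | ⟨y, hyA, hyPF, hyatt, hvy⟩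
        · exact ⟨a, hva, hPFA haPF, Or.inl (List.mem_cons_self)⟩
        · exact ⟨y, hvy, hyA, Or.inr ⟨hyPF, by rw [hyatt]; exact List.mem_cons_self⟩⟩
      · obtain ⟨y, hvy, hyA, hycase⟩ := twit s hs v hv
        rcases hycase with hy | ⟨hyPF, hyatt⟩
        · exact ⟨y, hvy, hyA, Or.inl (List.mem_cons_of_mem _ hy)⟩
        · exact ⟨y, hvy, hyA, Or.inr ⟨hyPF, List.mem_cons_of_mem _ hyatt⟩⟩
    · intro v
      -- key fact : shared vertices must be in X b
      have hvb : v ∈ X a → (∃ s ∈ walkPD hc X t d R A PF ω', v ∈ s) → v ∈ X b := by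
        rintro hva ⟨s, hsl, hvs⟩
        obtain ⟨y, hvy, hyA, hycase⟩ := twit s hsl v hvs
        obtain ⟨g, hg, hvg⟩ : ∃ g, g ∈ ω'.support ∧ v ∈ X g := by
          rcases hycase with hy | ⟨hyPF, hyatt⟩
          · exact ⟨y, hy, hvy⟩
          · refine ⟨att hc PF y, hyatt, ?_⟩
            have hnc : a ∉ compo hc A PF y := by
              intro hmem
              exact (not_mem_P_of_mem_compo hc hmem) haPF
            have hcr := crossing_of_not_mem_compo hc ha hPFcl (hPFA haPF) hnc
            exact hSv v y a hvy hva _ hcr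
        -- b lies on the path from a to g
        have hbg : pw hc b g = ω'.takeUntil g hg := by
          refine (pw_uniq hc ha _ (hω'.takeUntil hg)).symm
        have hbgsup : ∀ x ∈ (pw hc b g).support, x ∈ ω'.support := by
          intro x hx
          rw [hbg] at hx
          exact SimpleGraph.Walk.support_takeUntil_subset _ _ hx
        have hag : pw hc a g = SimpleGraph.Walk.cons h (pw hc b g) := by
          refine (pw_uniq hc ha _ ?_).symm
          rw [SimpleGraph.Walk.cons_isPath_iff]
          exact ⟨pw_isPath hc b g, fun hx => hanot (hbgsup a hx)⟩
        have hbmem : b ∈ (pw hc a g).support := by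
          rw [hag, SimpleGraph.Walk.support_cons]
          exact List.mem_cons_of_mem _ (SimpleGraph.Walk.start_mem_support _)
        exact hSv v a g hva hvg b hbmem
      by_cases hva : v ∈ X a
      · by_cases hvt : ∃ s ∈ walkPD hc X t d R A PF ω', v ∈ s
        · have hvbb := hvb hva hvt
          obtain ⟨pre', mid', post', hsplit', hpre', hmid', hpost', hhead'⟩ := tsplit v
          have hpre'nil : pre' = [] := hhead' hvbb
          refine ⟨[], blockFor hc X t d R A PF a ++ mid', post', ?_, by simp, ?_, hpost',
            fun _ => rfl⟩
          · rw [hsplit', hpre'nil]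
            simp
          · intro s hs
            rcases List.mem_append.mp hs with hs | hs
            · exact ball v hva s hs
            · exact hmid' s hs
        · push_neg at hvt
          exact ⟨[], blockFor hc X t d R A PF a, walkPD hc X t d R A PF ω', by simp,
            by simp, fun s hs => ball v hva s hs, hvt, fun _ => rfl⟩
      · by_cases hvB : ∃ s ∈ blockFor hc X t d R A PF a, v ∈ s
        · obtain ⟨s₀, hs₀, hvs₀⟩ := hvB
          rcases bwit s₀ hs₀ v hvs₀ with hva' | ⟨y₀, hy₀A, hy₀PF, hy₀att, hvy₀⟩
          · exact absurd hva' hva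
          have hnt : ∀ s ∈ walkPD hc X t d R A PF ω', v ∉ s := by
            intro s hsl hvs
            obtain ⟨y, hvy, hyA, hycase⟩ := twit s hsl v hvs
            have hynot : y ∉ compo hc A PF y₀ := by
              rcases hycase with hy | ⟨hyPF, hyatt⟩
              · intro hmem
                exact (not_mem_P_of_mem_compo hc hmem) (hsup' y hy)
              · intro hmem
                have := att_comp_const hc ha hPFcl (hattex y₀) hy₀A hmem
                rw [this, hy₀att] at hyatt
                exact hanot hyatt
            have hcr := crossing_of_not_mem_compo hc ha hPFcl hyA hynot
            have := hSv v y₀ y hvy₀ hvy _ hcr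
            rw [hy₀att] at this
            exact hva this
          obtain ⟨pre0, mid0, post0, hsplit0, hpre0, hmid0, hpost0⟩ := bsplit v hva
          refine ⟨pre0, mid0, post0 ++ walkPD hc X t d R A PF ω', ?_, hpre0, hmid0, ?_,
            fun hv => absurd hv hva⟩
          · rw [hsplit0]
            simp
          · intro s hs
            rcases List.mem_append.mp hs with hs | hs
            · exact hpost0 s hs
            · exact hnt s hs
        · push_neg at hvB
          obtain ⟨pre', mid', post', hsplit', hpre', hmid', hpost', hhead'⟩ := tsplit v
          refine ⟨blockFor hc X t d R A PF a ++ pre', mid', post', ?_, ?_, hmid', hpost',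
            fun hv => absurd hv hva⟩
          · rw [hsplit']
            simp
          · intro s hs
            rcases List.mem_append.mp hs with hs | hs
            · exact hvB s hs
            · exact hpre' s hs

end BlockAsm2

end TwPw

namespace TwPw

variable {ι V : Type} {T : SimpleGraph ι}

lemma main (hc : T.Connected) (ha : T.IsAcyclic) (X : ι → Finset V) (t : ℕ)
    (hsize : ∀ i, (X i).card ≤ t + 1)
    (hSv : ∀ (v : V) (i j : ι), v ∈ X i → v ∈ X j → ∀ x ∈ (pw hc i j).support, v ∈ X x) :
    ∀ (N : ℕ) (A : Finset ι), A.card ≤ N → A.Nonempty → Closed hc A →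
    ∀ (d : ℕ) (R : Finset V), 2 * (A.biUnion X \ R).card + 1 ≤ 3 ^ d →
    ∃ L : List (Finset V), L ≠ [] ∧ (∀ i ∈ A, ∃ s ∈ L, X i ⊆ s) ∧
      (∀ s ∈ L, s ⊆ A.biUnion X) ∧ (∀ s ∈ L, (s \ R).card ≤ (t + 1) * d) ∧
      (∀ v : V, SplitF v L) := by
  intro N
  induction N with
  | zero =>
    intro A hcard hne _ _ _ _
    have := Finset.card_pos.mpr hne
    omega
  | succ N IH =>
    intro A hcard hne hAcl d R hweight
    rcases d with _ | d
    · -- d = 0 : everything is already covered by R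
      have hz : (A.biUnion X \ R).card = 0 := by
        simp only [pow_zero] at hweight
        omega
      refine ⟨[A.biUnion X], by simp, ?_, by simp, ?_, ?_⟩
      · intro i hi
        exact ⟨A.biUnion X, List.mem_singleton_self _, Finset.subset_biUnion_of_mem X hi⟩
      · intro s hs
        rw [List.mem_singleton] at hs
        subst hs
        simp [hz]
      · intro v
        by_cases hv : v ∈ A.biUnion X
        · exact ⟨[], [A.biUnion X], [], by simp, by simp, by
            intro s hs; rw [List.mem_singleton] at hs; subst hs; exact hv, by simp⟩
        · exact ⟨[], [], [A.biUnion X], by simp, by simp, by simp, by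
            intro s hs; rw [List.mem_singleton] at hs; subst hs; exact hv⟩
    · -- d + 1 : use the spine
      have hrepex : ∀ v ∈ A.biUnion X, ∃ i, i ∈ A ∧ v ∈ X i := by
        intro v hv
        obtain ⟨i, hi, hvi⟩ := Finset.mem_biUnion.mp hv
        exact ⟨i, hi, hvi⟩
      set rep : V → ι := fun v => if h : ∃ i, i ∈ A ∧ v ∈ X i then h.choose else hne.choose
        with hrepdef
      have hrep : ∀ v ∈ A.biUnion X, rep v ∈ A ∧ v ∈ X (rep v) := by
        intro v hv
        have h := hrepex v hv
        rw [hrepdef]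
        simp only [dif_pos h]
        exact h.choose_spec
      set w : ι → ℕ := fun i => ((A.biUnion X \ R).filter (fun v => rep v = i)).card
        with hwdef
      have hwsum : ∑ i ∈ A, w i = (A.biUnion X \ R).card := by
        rw [hwdef]
        refine (Finset.card_eq_sum_card_fiberwise ?_).symm
        intro v hv
        exact (hrep v (Finset.mem_sdiff.mp hv).1).1
      obtain ⟨p, hpA, q, hqA, hPA, hcomps⟩ := spine hc ha hAcl hne w
      set PF := (pw hc p q).support.toFinset with hPFdef
      have hPFA : PF ⊆ A := fun x hx => hPA x (List.mem_toFinset.mp hx)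
      have hpPF : p ∈ PF := List.mem_toFinset.mpr (SimpleGraph.Walk.start_mem_support _)
      have hPFcl : ∀ a ∈ PF, ∀ b ∈ PF, ∀ x ∈ (pw hc a b).support, x ∈ PF := by
        intro a haP b hbP x hx
        exact List.mem_toFinset.mpr (support_pw_between hc ha (List.mem_toFinset.mp haP)
          (List.mem_toFinset.mp hbP) x hx)
      have hattex : ∀ y : ι, ∃ z, IsAtt hc PF y z := fun y => exists_isAtt hc ha hpPF
      have hchunk : ∀ y ∈ A, y ∉ PF →
          ∃ L, Props X t d R (compo hc A PF y) (att hc PF y) L := by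
        intro y hyA hyPF
        have hCsub : compo hc A PF y ⊆ A := compo_subset
        have hpnot : p ∉ compo hc A PF y := by
          intro hmem
          exact (not_mem_P_of_mem_compo hc hmem) hpPF
        have hCcard : (compo hc A PF y).card ≤ N := by
          have hsub' : compo hc A PF y ⊆ A.erase p := by
            intro u hu
            exact Finset.mem_erase.mpr ⟨fun h => hpnot (h ▸ hu), hCsub hu⟩
          have h1 := Finset.card_le_card hsub'
          have h2 := Finset.card_erase_of_mem hpA
          omega
        have hCne : (compo hc A PF y).Nonempty := ⟨y, self_mem_compo hc ha hyA hyPF⟩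
        have hCcl : Closed hc (compo hc A PF y) :=
          fun a haC b hbC x hx => compo_closed hc ha hAcl hyA haC hbC x hx
        -- weight bound for the component
        have hsubW : (compo hc A PF y).biUnion X \ (R ∪ X (att hc PF y)) ⊆
            (A.biUnion X \ R).filter (fun v => rep v ∈ compo hc A PF y) := by
          intro v hv
          rw [Finset.mem_sdiff, Finset.mem_union] at hv
          push_neg at hv
          have hv1 := hv.1
          have hv2 := hv.2.1
          have hv3 := hv.2.2
          obtain ⟨u, huC, hvu⟩ := Finset.mem_biUnion.mp hv1
          have hvA : v ∈ A.biUnion X := Finset.mem_biUnion.mpr ⟨u, hCsub huC, hvu⟩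
          rw [Finset.mem_filter, Finset.mem_sdiff]
          refine ⟨⟨hvA, hv2⟩, ?_⟩
          by_contra hrc
          obtain ⟨hrA, hvr⟩ := hrep v hvA
          have hCeq : compo hc A PF u = compo hc A PF y := compo_eq_of_mem hc ha hyA huC
          have hrc' : rep v ∉ compo hc A PF u := by rw [hCeq]; exact hrc
          have hcr := crossing_of_not_mem_compo hc ha hPFcl hrA hrc'
          have hvatt := hSv v u (rep v) hvu hvr _ hcr
          rw [att_comp_const hc ha hPFcl (hattex y) hyA huC] at hvatt
          exact hv3 hvatt
        have hfc : ((A.biUnion X \ R).filter (fun v => rep v ∈ compo hc A PF y)).card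
            = ∑ i ∈ compo hc A PF y, w i := by
          rw [Finset.card_eq_sum_card_fiberwise
            (f := rep) (s := (A.biUnion X \ R).filter (fun v => rep v ∈ compo hc A PF y))
              (t := compo hc A PF y)
              (fun v hv => Finset.mem_coe.mpr (Finset.mem_filter.mp (Finset.mem_coe.mp hv)).2)]
          refine Finset.sum_congr rfl ?_
          intro i hi
          rw [hwdef]
          congr 1
          rw [Finset.filter_filter]
          refine Finset.filter_congr ?_
          intro v _
          constructor
          · exact fun h => h.2
          · exact fun h => ⟨h ▸ hi, h⟩
        have hynotsup : y ∉ (pw hc p q).support := fun h => hyPF (List.mem_toFinset.mpr h)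
        have h3 := hcomps y hyA hynotsup
        rw [hwsum] at h3
        have hcle := Finset.card_le_card hsubW
        rw [hfc] at hcle
        have harith : 2 * ((compo hc A PF y).biUnion X \ (R ∪ X (att hc PF y))).card + 1
            ≤ 3 ^ d := by
          have hp3 : (3:ℕ) ^ (d + 1) = 3 * 3 ^ d := by rw [pow_succ]; ring
          rw [hp3] at hweight
          omega
        obtain ⟨L, h1, h2, h3', h4, h5⟩ :=
          IH (compo hc A PF y) hCcard hCne hCcl d (R ∪ X (att hc PF y)) harith
        exact ⟨L, h1, h2, h3', h4, h5⟩
      have hωsup : ∀ x ∈ (pw hc p q).support, x ∈ PF := fun x hx => List.mem_toFinset.mpr hx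
      obtain ⟨asub, asize, acov, awit, asplit⟩ :=
        asm hc ha X t d R A PF hPFcl hPFA hAcl hattex hchunk hsize hSv (pw hc p q)
          (pw_isPath hc p q) hωsup
      have hcov : ∀ i ∈ A, ∃ s ∈ walkPD hc X t d R A PF (pw hc p q), X i ⊆ s := by
        intro i hiA
        by_cases hiPF : i ∈ PF
        · exact acov i hiA (Or.inl (List.mem_toFinset.mp hiPF))
        · exact acov i hiA (Or.inr ⟨hiPF,
            List.mem_toFinset.mp (att_mem hc (hattex i))⟩)
      obtain ⟨s₀, hs₀, _⟩ := hcov p hpA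
      refine ⟨walkPD hc X t d R A PF (pw hc p q), List.ne_nil_of_mem hs₀, hcov, asub,
        asize, ?_⟩
      intro v
      obtain ⟨pre, mid, post, hsplit, h1, h2, h3, _⟩ := asplit v
      exact ⟨pre, mid, post, hsplit, h1, h2, h3⟩

end TwPw

namespace TwPw

variable {ι V : Type} {T : SimpleGraph ι}

lemma induce_walk_support {s : Set ι} :
    ∀ {u w : ↥s} (_ : (T.induce s).Walk u w), ∃ ωT : T.Walk u w,
      ∀ x ∈ ωT.support, x ∈ s := by
  intro u w ω
  induction ω with
  | @nil u' =>
    refine ⟨SimpleGraph.Walk.nil, ?_⟩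
    intro x hx
    rw [SimpleGraph.Walk.support_nil, List.mem_singleton] at hx
    subst hx
    exact u'.2
  | @cons u' v' w' hadj ω' ih =>
    obtain ⟨ωT', hωT'⟩ := ih
    have hadj' : T.Adj u' v' := by
      have := hadj
      rw [SimpleGraph.comap_adj] at this
      exact this
    refine ⟨SimpleGraph.Walk.cons hadj' ωT', ?_⟩
    intro x hx
    rw [SimpleGraph.Walk.support_cons] at hx
    rcases List.mem_cons.mp hx with rfl | hx
    · exact u'.2
    · exact hωT' x hx

lemma splitf_interval {v : V} {pre mid post : List (Finset V)}
    (hpre : ∀ s ∈ pre, v ∉ s) (hmid : ∀ s ∈ mid, v ∈ s) (hpost : ∀ s ∈ post, v ∉ s)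
    (i : ℕ) (hi : i < (pre ++ (mid ++ post)).length) :
    (v ∈ (pre ++ (mid ++ post))[i] ↔ (pre.length ≤ i ∧ i < pre.length + mid.length)) := by
  simp only [List.length_append] at hi
  by_cases h1 : i < pre.length
  · rw [List.getElem_append_left h1]
    constructor
    · intro hv
      exact absurd hv (hpre _ (List.getElem_mem h1))
    · intro hv
      omega
  · push_neg at h1
    have h1' : pre.length ≤ i := h1
    rw [List.getElem_append_right h1']
    by_cases h2 : i - pre.length < mid.length
    · rw [List.getElem_append_left h2]
      constructor
      · intro _
        omega
      · intro _
        exact hmid _ (List.getElem_mem h2)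
    · push_neg at h2
      rw [List.getElem_append_right h2]
      constructor
      · intro hv
        exact absurd hv (hpost _ (List.getElem_mem (by omega)))
      · intro hv
        omega

end TwPw

open TwPw in
theorem stmt11' {V : Type} [Fintype V] (n t : ℕ) (hn : Fintype.card V = n)
    (G : SimpleGraph V)
    (h : ∃ (ι : Type) (T : SimpleGraph ι) (X : ι → Finset V),
      T.Connected ∧ T.IsAcyclic ∧
      (∀ u v : V, G.Adj u v → ∃ i, u ∈ X i ∧ v ∈ X i) ∧
      (∀ v : V, (T.induce {i | v ∈ X i}).Connected) ∧
      (∀ i, (X i).card ≤ t + 1)) :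
    ∃ (m : ℕ) (X : Fin (m + 1) → Finset V),
      (∀ u v : V, G.Adj u v → ∃ i, u ∈ X i ∧ v ∈ X i) ∧
      (∀ v : V, ∃ a b : Fin (m + 1), a ≤ b ∧ ∀ i, v ∈ X i ↔ a ≤ i ∧ i ≤ b) ∧
      (∀ i, (X i).card ≤ (t + 1) * (Nat.log 3 (2 * n + 1) + 1) - 1 + 1) := by
  obtain ⟨ι, T, X, hc, ha, hedge, hvert, hsize⟩ := h
  set d := Nat.log 3 (2 * n + 1) + 1 with hd
  have hdpos : 0 < d := by rw [hd]; omega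
  have hpos : 1 ≤ (t + 1) * d := Nat.mul_pos (by omega) hdpos
  rcases isEmpty_or_nonempty V with hV | hV
  · refine ⟨0, fun _ => ∅, ?_, ?_, ?_⟩
    · intro u; exact (hV.false u).elim
    · intro v; exact (hV.false v).elim
    · intro i; simp
  · have hSv : ∀ (v : V) (i j : ι), v ∈ X i → v ∈ X j →
        ∀ x ∈ (pw hc i j).support, v ∈ X x := by
      intro v i j hvi hvj x hx
      have hreach := (hvert v).preconnected ⟨i, hvi⟩ ⟨j, hvj⟩
      obtain ⟨ω⟩ := hreach
      obtain ⟨ωT, hωT⟩ := induce_walk_support ω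
      have hb : ωT.bypass = pw hc i j :=
        pw_uniq hc ha _ (SimpleGraph.Walk.bypass_isPath _)
      rw [← hb] at hx
      exact hωT x (SimpleGraph.Walk.support_bypass_subset _ hx)
    have hivex : ∀ v : V, ∃ i, v ∈ X i := by
      intro v
      obtain ⟨⟨i, hi⟩⟩ := (hvert v).nonempty
      exact ⟨i, hi⟩
    set ivert : V → ι := fun v => (hivex v).choose with hivdef
    have hiv : ∀ v, v ∈ X (ivert v) := fun v => (hivex v).choose_spec
    set iedge : V → V → ι := fun u v =>
      if h : ∃ i, u ∈ X i ∧ v ∈ X i then h.choose else ivert u with hiedef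
    have hie : ∀ u v, G.Adj u v → u ∈ X (iedge u v) ∧ v ∈ X (iedge u v) := by
      intro u v huv
      have h := hedge u v huv
      rw [hiedef]
      simp only [dif_pos h]
      exact h.choose_spec
    set S : Finset ι := Finset.univ.image ivert ∪
      (Finset.univ ×ˢ Finset.univ).image (fun p : V × V => iedge p.1 p.2) with hS
    set A : Finset ι := S.biUnion
      (fun s1 => S.biUnion (fun s2 => (pw hc s1 s2).support.toFinset)) with hA
    have hmemA : ∀ x, x ∈ A ↔ ∃ s1 ∈ S, ∃ s2 ∈ S, x ∈ (pw hc s1 s2).support := by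
      intro x
      rw [hA]
      constructor
      · intro hx
        obtain ⟨s1, hs1, hx⟩ := Finset.mem_biUnion.mp hx
        obtain ⟨s2, hs2, hx⟩ := Finset.mem_biUnion.mp hx
        exact ⟨s1, hs1, s2, hs2, List.mem_toFinset.mp hx⟩
      · rintro ⟨s1, hs1, s2, hs2, hx⟩
        exact Finset.mem_biUnion.mpr ⟨s1, hs1,
          Finset.mem_biUnion.mpr ⟨s2, hs2, List.mem_toFinset.mpr hx⟩⟩
    have hSA : S ⊆ A := by
      intro s hs
      exact (hmemA s).mpr ⟨s, hs, s, hs, SimpleGraph.Walk.start_mem_support _⟩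
    obtain ⟨v₀⟩ := hV
    have hivS : ∀ v : V, ivert v ∈ S :=
      fun v => Finset.mem_union_left _ (Finset.mem_image.mpr ⟨v, Finset.mem_univ _, rfl⟩)
    have hAne : A.Nonempty := ⟨ivert v₀, hSA (hivS v₀)⟩
    have hAcl : Closed hc A := by
      intro a haA b hbA x hx
      obtain ⟨s1, hs1, s2, hs2, ha'⟩ := (hmemA a).mp haA
      obtain ⟨s3, hs3, s4, hs4, hb'⟩ := (hmemA b).mp hbA
      rcases support_pw_triangle hc ha a s1 b hx with h | h
      · have h2 : x ∈ (pw hc s1 a).support := (mem_support_pw_rev hc ha).mp h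
        exact (hmemA x).mpr ⟨s1, hs1, s2, hs2, support_pw_left_subset hc ha ha' x h2⟩
      · rcases support_pw_triangle hc ha s1 s3 b h with h' | h'
        · exact (hmemA x).mpr ⟨s1, hs1, s3, hs3, h'⟩
        · exact (hmemA x).mpr ⟨s3, hs3, s4, hs4, support_pw_left_subset hc ha hb' x h'⟩
    have hwt : 2 * (A.biUnion X \ (∅ : Finset V)).card + 1 ≤ 3 ^ d := by
      have h1 : (A.biUnion X).card ≤ n := by
        rw [← hn, ← Finset.card_univ]
        exact Finset.card_le_card (Finset.subset_univ _)
      have h2 := Nat.lt_pow_succ_log_self (by norm_num : 1 < 3) (2 * n + 1)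
      rw [Finset.sdiff_empty]
      rw [hd]
      omega
    obtain ⟨L, hLne, hLcov, hLsub, hLsize, hLsplit⟩ :=
      main hc ha X t hsize hSv A.card A le_rfl hAne hAcl d ∅ hwt
    set m := L.length - 1 with hm
    have hlen : L.length = m + 1 := by
      have := List.length_pos_iff.mpr hLne
      omega
    refine ⟨m, fun i => L[(i : ℕ)]'(by rw [hlen]; exact i.2), ?_, ?_, ?_⟩
    · -- edges
      intro u v huv
      obtain ⟨hu, hv⟩ := hie u v huv
      have hieS : iedge u v ∈ S := Finset.mem_union_right _
        (Finset.mem_image.mpr ⟨(u, v), Finset.mem_product.mpr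
          ⟨Finset.mem_univ _, Finset.mem_univ _⟩, rfl⟩)
      obtain ⟨s, hsL, hXs⟩ := hLcov _ (hSA hieS)
      obtain ⟨k, hk, hks⟩ := List.mem_iff_getElem.mp hsL
      refine ⟨⟨k, by omega⟩, ?_, ?_⟩
      · simp only
        rw [hks]
        exact hXs hu
      · simp only
        rw [hks]
        exact hXs hv
    · -- intervals
      intro v
      obtain ⟨pre, mid, post, hsplit, hpre, hmid, hpost⟩ := hLsplit v
      have hL' : L = pre ++ (mid ++ post) := by rw [hsplit, List.append_assoc]
      -- v is covered somewhere
      have hvcov : ∃ s ∈ L, v ∈ s := by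
        obtain ⟨s, hsL, hXs⟩ := hLcov _ (hSA (hivS v))
        exact ⟨s, hsL, hXs (hiv v)⟩
      have hmidne : mid ≠ [] := by
        obtain ⟨s, hsL, hvs⟩ := hvcov
        rw [hL'] at hsL
        rcases List.mem_append.mp hsL with hs | hs
        · exact absurd hvs (hpre s hs)
        · rcases List.mem_append.mp hs with hs | hs
          · exact fun h => by rw [h] at hs; simp at hs
          · exact absurd hvs (hpost s hs)
      have hmlen : 1 ≤ mid.length := by
        rcases mid with _ | _
        · exact absurd rfl hmidne
        · simp
      have hlens : pre.length + (mid.length + post.length) = m + 1 := by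
        have := congrArg List.length hL'
        rw [hlen] at this
        simp only [List.length_append] at this
        omega
      refine ⟨⟨pre.length, by omega⟩, ⟨pre.length + mid.length - 1, by omega⟩, ?_, ?_⟩
      · rw [Fin.le_def]
        simp only
        omega
      · intro i
        have hi : (i : ℕ) < (pre ++ (mid ++ post)).length := by
          simp only [List.length_append]
          omega
        have hkey := splitf_interval hpre hmid hpost (i : ℕ) hi
        simp only
        rw [Fin.le_def, Fin.le_def]
        simp only
        have hgetcongr : L[(i : ℕ)]'(by rw [hlen]; exact i.2) =
            (pre ++ (mid ++ post))[(i : ℕ)]'hi := by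
          congr 1
        rw [hgetcongr, hkey]
        omega
    · -- sizes
      intro i
      have hmem : L[(i : ℕ)]'(by rw [hlen]; exact i.2) ∈ L := List.getElem_mem _
      have h2 := hLsize _ hmem
      rw [Finset.sdiff_empty] at h2
      simp only
      rw [Nat.sub_add_cancel hpos]
      exact h2

/-- `G` has a tree-decomposition of width at most `t`: a tree `T` with bags
`X i ⊆ V(G)` of size at most `t + 1`, every edge of `G` inside some bag, and for
every vertex `v` the set of nodes whose bag contains `v` inducing a nonempty
subtree of `T`. -/
def HasTreeDecompWidth {V : Type} (G : SimpleGraph V) (t : ℕ) : Prop :=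
  ∃ (ι : Type) (T : SimpleGraph ι) (X : ι → Finset V),
    T.Connected ∧ T.IsAcyclic ∧
    (∀ u v : V, G.Adj u v → ∃ i, u ∈ X i ∧ v ∈ X i) ∧
    (∀ v : V, (T.induce {i | v ∈ X i}).Connected) ∧
    (∀ i, (X i).card ≤ t + 1)

/-- `G` has a path-decomposition of width at most `k`: a sequence of bags of size
at most `k + 1` covering all edges, such that every vertex appears in a nonempty
contiguous interval of bags. -/
def HasPathDecompWidth {V : Type} (G : SimpleGraph V) (k : ℕ) : Prop :=
  ∃ (m : ℕ) (X : Fin (m + 1) → Finset V),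
    (∀ u v : V, G.Adj u v → ∃ i, u ∈ X i ∧ v ∈ X i) ∧
    (∀ v : V, ∃ a b : Fin (m + 1), a ≤ b ∧ ∀ i, v ∈ X i ↔ a ≤ i ∧ i ≤ b) ∧
    (∀ i, (X i).card ≤ k + 1)

/-- Every `n`-vertex graph of treewidth at most `t` has pathwidth at most
`(t+1)⌊log₃(2n+1) + 1⌋ - 1`. -/
theorem stmt11 {V : Type} [Fintype V] (n t : ℕ) (hn : Fintype.card V = n)
    (G : SimpleGraph V) (h : HasTreeDecompWidth G t) :
    HasPathDecompWidth G ((t + 1) * (Nat.log 3 (2 * n + 1) + 1) - 1) := by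
  exact stmt11' n t hn G h
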